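/- arXiv:1408.3204 — 7 statements merged into one kernel-verified Lean document; each statement's English description precedes it below -/
import Mathlib

section
/- For every graph G with at least one non-adjacent pair of vertices and every edge e added between two non-adjacent vertices, mp(G+e) ≤ 3·mp(G), where mp denotes the number of vertices on a longest degree monotone path. -/
open SimpleGraph

section Aux

variable {α : Type*}

lemma chain'_imp_of_mem {R S : α → α → Prop} :
    ∀ {l : List α}, (∀ a b, a ∈ l → b ∈ l → R a b → S a b) → l.Chain' R → l.Chain' S := by
  intro l
  induction l with
  | nil => simp [List.Chain']
  | cons a t ih =>
    intro h hc
    simp only [List.Chain'] at hc ⊢; rw [List.isChain_cons] at hc ⊢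
    refine ⟨fun b hb => h a b (by simp) (by simp [List.mem_of_mem_head? hb]) (hc.1 b hb),
      ih (fun x y hx hy => h x y (by simp [hx]) (by simp [hy])) hc.2⟩

lemma plainSeg {R R' : α → α → Prop} {f f' : α → ℕ} {u v : α}
    (hR : ∀ a b, R' a b → R a b ∨ (a = u ∧ b = v) ∨ (a = v ∧ b = u))
    (hf : ∀ x, x ≠ u → x ≠ v → f' x = f x)
    {t : List α} (hut : u ∉ t) (hvt : v ∉ t)
    (hch : t.Chain' R') (hm : (t.map f').Chain' (· ≤ ·)) :
    t.Chain' R ∧ (t.map f).Chain' (· ≤ ·) := by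
  constructor
  · refine chain'_imp_of_mem (fun a b ha hb hab => ?_) hch
    rcases hR a b hab with h | ⟨rfl, rfl⟩ | ⟨rfl, rfl⟩
    · exact h
    · exact absurd ha hut
    · exact absurd ha hvt
  · rwa [List.map_congr_left (fun x hx => (hf x (fun h => hut (h ▸ hx)) (fun h => hvt (h ▸ hx))).symm)]

lemma headSeg {R R' : α → α → Prop} {f f' : α → ℕ} {u v : α} (huv : u ≠ v)
    (hR : ∀ a b, R' a b → R a b ∨ (a = u ∧ b = v) ∨ (a = v ∧ b = u))
    (hf : ∀ x, x ≠ u → x ≠ v → f' x = f x)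
    (hle : ∀ x, f x ≤ f' x)
    {w : α} {t : List α} (hw : w = u ∨ w = v) (hut : u ∉ t) (hvt : v ∉ t)
    (hch : (w :: t).Chain' R') (hm : ((w :: t).map f').Chain' (· ≤ ·)) :
    (w :: t).Chain' R ∧ ((w :: t).map f).Chain' (· ≤ ·) := by
  simp only [List.Chain'] at hch; rw [List.isChain_cons] at hch
  simp only [List.Chain'] at hm; rw [List.map_cons, List.isChain_cons] at hm
  have hplain := plainSeg hR hf hut hvt hch.2 hm.2
  constructor
  · simp only [List.Chain']; rw [List.isChain_cons]
    refine ⟨fun b hb => ?_, hplain.1⟩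
    have hbt : b ∈ t := List.mem_of_mem_head? hb
    rcases hR w b (hch.1 b hb) with h | ⟨rfl, rfl⟩ | ⟨rfl, rfl⟩
    · exact h
    · exact absurd hbt hvt
    · exact absurd hbt hut
  · simp only [List.Chain']; rw [List.map_cons, List.isChain_cons]
    refine ⟨fun y hy => ?_, hplain.2⟩
    rw [List.head?_map] at hy
    rw [Option.mem_def] at hy
    rcases Option.map_eq_some_iff.mp hy with ⟨b, hb, rfl⟩
    have hbt : b ∈ t := List.mem_of_mem_head? hb
    have h1 : f' w ≤ f' b := hm.1 (f' b) (by rw [List.head?_map, Option.mem_def]; exact Option.map_eq_some_iff.mpr ⟨b, hb, rfl⟩)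
    have h2 : f' b = f b := hf b (fun h => hut (h ▸ hbt)) (fun h => hvt (h ▸ hbt))
    exact le_trans (hle w) (h2 ▸ h1)

lemma split3 {R R' : α → α → Prop} {f f' : α → ℕ} {u v : α} (huv : u ≠ v)
    (hR : ∀ a b, R' a b → R a b ∨ (a = u ∧ b = v) ∨ (a = v ∧ b = u))
    (hf : ∀ x, x ≠ u → x ≠ v → f' x = f x)
    (hle : ∀ x, f x ≤ f' x)
    (l : List α) (hnd : l.Nodup) (hch : l.Chain' R')
    (hm : (l.map f').Chain' (· ≤ ·)) :
    ∃ l1 l2 l3 : List α, l = l1 ++ l2 ++ l3 ∧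
      ∀ li ∈ [l1, l2, l3], li.Chain' R ∧ (li.map f).Chain' (· ≤ ·) := by
  have hnil : ([] : List α).Chain' R ∧ (([] : List α).map f).Chain' (· ≤ ·) := by simp [List.Chain']
  by_cases hu : u ∈ l
  · obtain ⟨s, t, rfl⟩ := List.append_of_mem hu
    rw [List.nodup_append'] at hnd
    have hus : u ∉ s := fun h => hnd.2.2 h (by simp)
    have hut : u ∉ t := by have := hnd.2.1; rw [List.nodup_cons] at this; exact this.1
    by_cases hv : v ∈ s ++ u :: t
    · rw [List.mem_append] at hv
      rcases hv with hvs | hvt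
      · -- v in s : segments s1, v::s2, u::t
        obtain ⟨s1, s2, rfl⟩ := List.append_of_mem hvs
        have hnds := hnd.1
        rw [List.nodup_append'] at hnds
        have hvs1 : v ∉ s1 := fun h => hnds.2.2 h (by simp)
        have hvs2 : v ∉ s2 := by have := hnds.2.1; rw [List.nodup_cons] at this; exact this.1
        have hus1 : u ∉ s1 := fun h => hus (by simp [h])
        have hus2 : u ∉ s2 := fun h => hus (by simp [h])
        refine ⟨s1, v :: s2, u :: t, by simp, ?_⟩
        have heq : (s1 ++ v :: s2) ++ u :: t = s1 ++ ((v :: s2) ++ (u :: t)) := by simp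
        rw [heq] at hch hm
        simp only [List.Chain'] at hm; rw [List.map_append, List.map_append, List.isChain_append] at hm
        simp only [List.Chain'] at hch; rw [List.isChain_append] at hch
        have hch1 := (List.isChain_append.mp hch.2.1)
        have hm1 := (List.isChain_append.mp hm.2.1)
        intro li hli
        simp only [List.mem_cons, List.not_mem_nil, or_false] at hli
        rcases hli with rfl | rfl | rfl
        · exact plainSeg hR hf hus1 hvs1 hch.1 hm.1
        · exact headSeg huv hR hf hle (Or.inr rfl) hus2 hvs2 hch1.1 hm1.1
        · refine headSeg huv hR hf hle (Or.inl rfl) hut ?_ hch1.2.1 hm1.2.1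
          intro h
          exact hnd.2.2 (show v ∈ s1 ++ v :: s2 by simp) (by simp [h])
      · -- v in t : segments s, u::t1, v::t2
        rw [List.mem_cons] at hvt
        rcases hvt with h | hvt
        · exact absurd h.symm huv
        obtain ⟨t1, t2, rfl⟩ := List.append_of_mem hvt
        have hvs : v ∉ s := fun h => (List.disjoint_of_nodup_append (by rw [List.nodup_append']; exact hnd)) h (by simp)
        have hndt : (t1 ++ v :: t2).Nodup := by
          have := hnd.2.1; rw [List.nodup_cons] at this; exact this.2
        rw [List.nodup_append'] at hndt
        have hvt1 : v ∉ t1 := fun h => hndt.2.2 h (by simp)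
        have hvt2 : v ∉ t2 := by have := hndt.2.1; rw [List.nodup_cons] at this; exact this.1
        have hut1 : u ∉ t1 := fun h => hut (by simp [h])
        have hut2 : u ∉ t2 := fun h => hut (by simp [h])
        refine ⟨s, u :: t1, v :: t2, by simp, ?_⟩
        have heq : s ++ u :: (t1 ++ v :: t2) = s ++ ((u :: t1) ++ (v :: t2)) := by simp
        rw [heq] at hch hm
        simp only [List.Chain'] at hm; rw [List.map_append, List.map_append, List.isChain_append] at hm
        simp only [List.Chain'] at hch; rw [List.isChain_append] at hch
        have hch1 := (List.isChain_append.mp hch.2.1)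
        have hm1 := (List.isChain_append.mp hm.2.1)
        intro li hli
        simp only [List.mem_cons, List.not_mem_nil, or_false] at hli
        rcases hli with rfl | rfl | rfl
        · exact plainSeg hR hf hus hvs hch.1 hm.1
        · exact headSeg huv hR hf hle (Or.inl rfl) hut1 hvt1 hch1.1 hm1.1
        · exact headSeg huv hR hf hle (Or.inr rfl) hut2 hvt2 hch1.2.1 hm1.2.1
    · -- v not in l, u in l: segments s, u::t, []
      rw [List.mem_append, List.mem_cons] at hv
      push_neg at hv
      refine ⟨s, u :: t, [], by simp, ?_⟩
      simp only [List.Chain'] at hch; rw [List.isChain_append] at hch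
      simp only [List.Chain'] at hm; rw [List.map_append, List.isChain_append] at hm
      intro li hli
      simp only [List.mem_cons, List.not_mem_nil, or_false] at hli
      rcases hli with rfl | rfl | rfl
      · exact plainSeg hR hf hus hv.1 hch.1 hm.1
      · exact headSeg huv hR hf hle (Or.inl rfl) hut hv.2.2 hch.2.1 hm.2.1
      · exact hnil
  · by_cases hv : v ∈ l
    · -- u not in l, v in l: segments s, v::t, []
      obtain ⟨s, t, rfl⟩ := List.append_of_mem hv
      rw [List.nodup_append'] at hnd
      have hvs : v ∉ s := fun h => hnd.2.2 h (by simp)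
      have hvt : v ∉ t := by have := hnd.2.1; rw [List.nodup_cons] at this; exact this.1
      rw [List.mem_append, List.mem_cons] at hu
      push_neg at hu
      refine ⟨s, v :: t, [], by simp, ?_⟩
      simp only [List.Chain'] at hch; rw [List.isChain_append] at hch
      simp only [List.Chain'] at hm; rw [List.map_append, List.isChain_append] at hm
      intro li hli
      simp only [List.mem_cons, List.not_mem_nil, or_false] at hli
      rcases hli with rfl | rfl | rfl
      · exact plainSeg hR hf hu.1 hvs hch.1 hm.1
      · exact headSeg huv hR hf hle (Or.inr rfl) hu.2.2 hvt hch.2.1 hm.2.1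
      · exact hnil
    · refine ⟨l, [], [], by simp, ?_⟩
      intro li hli
      simp only [List.mem_cons, List.not_mem_nil, or_false] at hli
      rcases hli with rfl | rfl | rfl
      · exact plainSeg hR hf hu hv hch hm
      · exact hnil
      · exact hnil

end Aux


/-- `mp G` is the maximum number of vertices of a degree monotone path in `G`. -/
noncomputable def mp {V : Type*} [Fintype V] (G : SimpleGraph V) : ℕ :=
  letI : DecidableEq V := Classical.decEq _
  letI : DecidableRel G.Adj := Classical.decRel _
  sSup {n : ℕ | ∃ (u v : V) (p : G.Walk u v), p.IsPath ∧
    (List.Chain' (· ≤ ·) (p.support.map (fun x => G.degree x)) ∨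
     List.Chain' (· ≥ ·) (p.support.map (fun x => G.degree x))) ∧ p.support.length = n}

lemma exists_walk_of_chain {V : Type*} {G : SimpleGraph V} :
    ∀ (l : List V), l ≠ [] → l.Chain' G.Adj → ∃ (a b : V) (p : G.Walk a b), p.support = l := by
  intro l
  induction l with
  | nil => simp
  | cons a t ih =>
    intro _ hc
    rcases t with _ | ⟨c, t'⟩
    · exact ⟨a, a, Walk.nil, rfl⟩
    · obtain ⟨x, y, p, hp⟩ := ih (by simp) (List.IsChain.tail hc)
      have hx : x = c := by
        have h2 := p.support_eq_cons
        rw [hp] at h2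
        exact (List.cons_eq_cons.mp h2).1.symm
      subst hx
      have hadj : G.Adj a x := (List.isChain_cons_cons.mp hc).1
      exact ⟨a, y, Walk.cons hadj p, by rw [Walk.support_cons, hp]⟩

lemma degree_eq_ncard {V : Type*} (G : SimpleGraph V) (x : V) [Fintype (G.neighborSet x)] :
    G.degree x = (G.neighborSet x).ncard := by
  rw [← G.card_neighborSet_eq_degree x, ← Nat.card_eq_fintype_card, Nat.card_coe_set_eq]

lemma length_le_mp {V : Type*} [Fintype V] {G : SimpleGraph V} (l : List V)
    (hnd : l.Nodup) (hch : l.Chain' G.Adj)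
    (hm : (l.map (fun x => (G.neighborSet x).ncard)).Chain' (· ≤ ·) ∨
          (l.map (fun x => (G.neighborSet x).ncard)).Chain' (· ≥ ·)) :
    l.length ≤ mp G := by
  rcases eq_or_ne l [] with rfl | hne
  · simp
  obtain ⟨a, b, p, hp⟩ := exists_walk_of_chain l hne hch
  letI : DecidableEq V := Classical.decEq _
  letI : DecidableRel G.Adj := Classical.decRel _
  unfold mp
  refine le_csSup ?_ ⟨a, b, p, ?_, ?_, by rw [hp]⟩
  · refine ⟨Fintype.card V, fun n hn => ?_⟩
    obtain ⟨a', b', q, hq, _, rfl⟩ := hn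
    exact hq.support_nodup.length_le_card
  · rw [SimpleGraph.Walk.isPath_def, hp]; exact hnd
  · rw [hp]
    have h3 : (List.map (fun x => SimpleGraph.degree G x) l) = l.map (fun x => (G.neighborSet x).ncard) :=
      List.map_congr_left (fun x _ => degree_eq_ncard G x)
    rw [h3]
    exact hm

theorem mp_add_edge_le {V : Type*} [Fintype V] (G : SimpleGraph V) (u v : V)
    (hne : u ≠ v) (hna : ¬ G.Adj u v) :
    mp (G ⊔ fromEdgeSet {s(u, v)}) ≤ 3 * mp G := by
  set G' := G ⊔ fromEdgeSet {s(u, v)} with hG'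
  have hadj' : ∀ a b, G'.Adj a b ↔ G.Adj a b ∨ (a = u ∧ b = v) ∨ (a = v ∧ b = u) := by
    intro a b
    rw [hG']
    simp only [sup_adj, fromEdgeSet_adj, Set.mem_singleton_iff, Sym2.eq_iff]
    constructor
    · rintro (h | ⟨(⟨rfl, rfl⟩ | ⟨rfl, rfl⟩), h2⟩)
      · exact Or.inl h
      · exact Or.inr (Or.inl ⟨rfl, rfl⟩)
      · exact Or.inr (Or.inr ⟨rfl, rfl⟩)
    · rintro (h | ⟨rfl, rfl⟩ | ⟨rfl, rfl⟩)
      · exact Or.inl h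
      · exact Or.inr ⟨Or.inl ⟨rfl, rfl⟩, hne⟩
      · exact Or.inr ⟨Or.inr ⟨rfl, rfl⟩, hne.symm⟩
  set d : V → ℕ := fun x => (G.neighborSet x).ncard with hd
  set d' : V → ℕ := fun x => (G'.neighborSet x).ncard with hd'
  have hR : ∀ a b, G'.Adj a b → G.Adj a b ∨ (a = u ∧ b = v) ∨ (a = v ∧ b = u) :=
    fun a b h => (hadj' a b).mp h
  have hf : ∀ x, x ≠ u → x ≠ v → d' x = d x := by
    intro x hxu hxv
    have hset : G'.neighborSet x = G.neighborSet x := by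
      ext y
      rw [mem_neighborSet, mem_neighborSet, hadj']
      constructor
      · rintro (h | ⟨rfl, rfl⟩ | ⟨rfl, rfl⟩)
        · exact h
        · exact absurd rfl hxu
        · exact absurd rfl hxv
      · exact Or.inl
    rw [hd', hd]
    simp only [hset]
  have hle : ∀ x, d x ≤ d' x := by
    intro x
    refine Set.ncard_le_ncard (fun y hy => ?_) (Set.toFinite _)
    rw [mem_neighborSet] at hy ⊢
    exact (hadj' x y).mpr (Or.inl hy)
  refine csSup_le' fun n hn => ?_
  letI : DecidableEq V := Classical.decEq _
  letI : DecidableRel G'.Adj := Classical.decRel _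
  obtain ⟨a, b, p, hp, hm, rfl⟩ := hn
  have hnd : p.support.Nodup := hp.support_nodup
  have hch : p.support.Chain' G'.Adj := p.isChain_adj_support
  have hmd : (p.support.map d').Chain' (· ≤ ·) ∨ (p.support.map d').Chain' (· ≥ ·) := by
    have he : p.support.map (fun x => G'.degree x) = p.support.map d' :=
      List.map_congr_left (fun x _ => degree_eq_ncard G' x)
    rwa [he] at hm
  have key : ∀ (l : List V), l.Nodup → l.Chain' G'.Adj → (l.map d').Chain' (· ≤ ·) →
      l.length ≤ 3 * mp G := by
    intro l hlnd hlch hlm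
    obtain ⟨l1, l2, l3, hsplit, hprop⟩ := split3 hne hR hf hle l hlnd hlch hlm
    have hs1 : l1.Sublist l := hsplit ▸ (List.sublist_append_left l1 l2).trans
      (List.sublist_append_left (l1 ++ l2) l3)
    have hs2 : l2.Sublist l := hsplit ▸ (List.sublist_append_right l1 l2).trans
      (List.sublist_append_left (l1 ++ l2) l3)
    have hs3 : l3.Sublist l := hsplit ▸ List.sublist_append_right (l1 ++ l2) l3
    have h1 := length_le_mp l1 (hlnd.sublist hs1) (hprop l1 (by simp)).1
      (Or.inl (hprop l1 (by simp)).2)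
    have h2 := length_le_mp l2 (hlnd.sublist hs2) (hprop l2 (by simp)).1
      (Or.inl (hprop l2 (by simp)).2)
    have h3 := length_le_mp l3 (hlnd.sublist hs3) (hprop l3 (by simp)).1
      (Or.inl (hprop l3 (by simp)).2)
    rw [hsplit, List.length_append, List.length_append]
    omega
  rcases hmd with hmd | hmd
  · exact key p.support hnd hch hmd
  · have hrev := key p.support.reverse (List.nodup_reverse.mpr hnd)
      (by simp only [List.Chain']; rw [List.isChain_reverse]; exact List.IsChain.imp (fun a b h => h.symm) hch)
      (by rw [List.map_reverse]; simp only [List.Chain']; rw [List.isChain_reverse]; exact hmd)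
    rwa [List.length_reverse] at hrev
end

section
/- For every graph G and every edge e of G, mp(G−e) ≤ 3·mp(G) − 1, where mp denotes the number of vertices on a longest degree monotone path. -/
open SimpleGraph

private lemma pw_shift {V : Type*} {f f' : V → ℕ} {l : List V}
    (hl : l.Pairwise (fun x y => f' x ≤ f' y))
    (hfx : ∀ x ∈ l, f x = f' x) :
    l.Pairwise (fun x y => f x ≤ f y) :=
  hl.imp_of_mem (fun ha hb h => by rw [hfx _ ha, hfx _ hb]; exact h)

private lemma pw_bump {V : Type*} {f f' : V → ℕ} {l : List V} {u : V}
    (hl : (l ++ [u]).Pairwise (fun x y => f' x ≤ f' y))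
    (hfx : ∀ x ∈ l, f x = f' x)
    (hfu : f' u ≤ f u) :
    (l ++ [u]).Pairwise (fun x y => f x ≤ f y) := by
  rw [List.pairwise_append] at hl ⊢
  obtain ⟨h1, -, h3⟩ := hl
  refine ⟨pw_shift h1 hfx, List.pairwise_singleton _ _, ?_⟩
  intro x hx y hy
  rw [List.mem_singleton] at hy
  rw [hy, hfx _ hx]
  exact le_trans (h3 x hx u (by simp)) hfu

private lemma support_eq_dropLast {V : Type*} {H : SimpleGraph V} {a u : V} (q : H.Walk a u) :
    q.support = q.support.dropLast ++ [u] := by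
  conv_lhs => rw [← List.dropLast_append_getLast q.support_ne_nil]
  rw [q.getLast_support]

private lemma seg_le {V : Type*} {G H : SimpleGraph V} (hle : H ≤ G)
    {f : V → ℕ} {m : ℕ}
    (hm : ∀ (c d : V) (q : G.Walk c d), q.IsPath →
      List.Chain' (· ≤ ·) (q.support.map f) → q.support.length ≤ m)
    {c d : V} (r : H.Walk c d) (hr : r.IsPath)
    (hmono : r.support.Pairwise (fun x y => f x ≤ f y)) :
    r.support.length ≤ m := by
  have hE : ∀ e ∈ r.edges, e ∈ G.edgeSet :=
    fun e h => edgeSet_mono hle (r.edges_subset_edgeSet h)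
  have := hm c d (r.transfer G hE) (hr.transfer hE)
    (by rw [Walk.support_transfer]
        exact List.isChain_iff_pairwise.mpr (List.pairwise_map.mpr hmono))
  rwa [Walk.support_transfer] at this

private lemma tail_seg_le {V : Type*} {G H : SimpleGraph V} (hle : H ≤ G)
    {f : V → ℕ} {m : ℕ}
    (hm : ∀ (c d : V) (q : G.Walk c d), q.IsPath →
      List.Chain' (· ≤ ·) (q.support.map f) → q.support.length ≤ m)
    {c d : V} (r : H.Walk c d) (hr : r.IsPath)
    (hmono : r.support.tail.Pairwise (fun x y => f x ≤ f y)) :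
    r.support.tail.length ≤ m := by
  cases r with
  | nil => simp
  | cons h r' =>
    rw [Walk.support_cons, List.tail_cons] at hmono ⊢
    exact seg_le hle hm r' hr.of_cons hmono

private lemma core {V : Type*} {G H : SimpleGraph V} (hle : H ≤ G) {u v : V}
    (huv : G.Adj u v) {f f' : V → ℕ}
    (hdu : f u = f' u + 1) (hdv : f v = f' v + 1)
    (hd : ∀ x, x ≠ u → x ≠ v → f x = f' x)
    {m : ℕ}
    (hm : ∀ (c d : V) (q : G.Walk c d), q.IsPath →
      List.Chain' (· ≤ ·) (q.support.map f) → q.support.length ≤ m)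
    {a b : V} (q1 : H.Walk a u) (q2 : H.Walk u v) (q3 : H.Walk v b)
    (hp : (q1.append (q2.append q3)).IsPath)
    (hmono : List.Chain' (· ≤ ·) ((q1.append (q2.append q3)).support.map f')) :
    (q1.append (q2.append q3)).support.length ≤ 3 * m - 1 := by
  cases q2 with
  | nil => exact absurd huv G.irrefl
  | @cons _ w _ h2 q2' =>
    have hS : (q1.append ((Walk.cons h2 q2').append q3)).support
        = q1.support ++ (q2'.support ++ q3.support.tail) := by
      rw [Walk.support_append, Walk.cons_append, Walk.support_cons, List.tail_cons,
        Walk.support_append]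
    rw [hS] at hmono ⊢
    have hnd : (q1.support ++ (q2'.support ++ q3.support.tail)).Nodup := by
      have := hp.support_nodup; rwa [hS] at this
    have hP : (q1.support ++ (q2'.support ++ q3.support.tail)).Pairwise
        (fun x y => f' x ≤ f' y) :=
      List.pairwise_map.mp (List.isChain_iff_pairwise.mp hmono)
    rw [List.nodup_append] at hnd
    obtain ⟨hnd1, hnd23, hdisj1⟩ := hnd
    rw [List.nodup_append] at hnd23
    obtain ⟨hnd2, hnd3, hdisj23⟩ := hnd23
    rw [List.pairwise_append] at hP
    obtain ⟨hP1, hP23, hcr1⟩ := hP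
    rw [List.pairwise_append] at hP23
    obtain ⟨hP2, hP3, hcr23⟩ := hP23
    have hu1 : u ∈ q1.support := q1.end_mem_support
    have hv2 : v ∈ q2'.support := q2'.end_mem_support
    have hvnot1 : v ∉ q1.support := fun h => hdisj1 _ h _ (List.mem_append_left _ hv2) rfl
    have hunot2 : u ∉ q2'.support := fun h => hdisj1 _ hu1 _ (List.mem_append_left _ h) rfl
    have hunot3 : u ∉ q3.support.tail := fun h => hdisj1 _ hu1 _ (List.mem_append_right _ h) rfl
    have hvnot3 : v ∉ q3.support.tail := fun h => hdisj23 _ hv2 _ h rfl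
    have e1 : q1.support.dropLast ++ [u] = q1.support := (support_eq_dropLast q1).symm
    have e2 : q2'.support.dropLast ++ [v] = q2'.support := (support_eq_dropLast q2').symm
    have ht1 : ∀ x ∈ q1.support.dropLast, x ≠ u ∧ x ≠ v := by
      intro x hx
      have hxs1 : x ∈ q1.support := by rw [← e1]; exact List.mem_append_left _ hx
      refine ⟨?_, fun hh => hvnot1 (hh ▸ hxs1)⟩
      rintro rfl
      have := hnd1
      rw [← e1, List.nodup_append] at this
      exact this.2.2 _ hx _ (List.mem_singleton_self _) rfl
    have ht2 : ∀ x ∈ q2'.support.dropLast, x ≠ u ∧ x ≠ v := by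
      intro x hx
      have hxs2 : x ∈ q2'.support := by rw [← e2]; exact List.mem_append_left _ hx
      refine ⟨fun hh => hunot2 (hh ▸ hxs2), ?_⟩
      rintro rfl
      have := hnd2
      rw [← e2, List.nodup_append] at this
      exact this.2.2 _ hx _ (List.mem_singleton_self _) rfl
    -- segment A
    have hq1E : ∀ e ∈ q1.edges, e ∈ G.edgeSet :=
      fun e h => edgeSet_mono hle (q1.edges_subset_edgeSet h)
    have hq1path : q1.IsPath := hp.of_append_left
    have hAsup : ((q1.transfer G hq1E).concat huv).support = q1.support ++ [v] := by
      rw [Walk.support_concat, Walk.support_transfer]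
    have hApath : ((q1.transfer G hq1E).concat huv).IsPath := by
      refine Walk.IsPath.mk' ?_
      rw [hAsup, List.nodup_append]
      exact ⟨hnd1, List.nodup_singleton _,
        fun x hx y hy hxy => by subst hxy; rw [List.mem_singleton] at hy; subst hy; exact hvnot1 hx⟩
    have hfu : f' u ≤ f u := by rw [hdu]; exact Nat.le_succ _
    have hfv : f' v ≤ f v := by rw [hdv]; exact Nat.le_succ _
    have hAmono : ((q1.transfer G hq1E).concat huv).support.Pairwise
        (fun x y => f x ≤ f y) := by
      rw [hAsup, ← e1, List.pairwise_append]
      refine ⟨?_, List.pairwise_singleton _ _, ?_⟩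
      · refine pw_bump (by rw [e1]; exact hP1) (fun x hx => hd x (ht1 x hx).1 (ht1 x hx).2) hfu
      · intro x hx y hy
        rw [List.mem_singleton] at hy
        rcases List.mem_append.mp hx with hx' | hx'
        · rw [hy, hd x (ht1 x hx').1 (ht1 x hx').2]
          refine le_trans ?_ hfv
          exact hcr1 x (by rw [← e1]; exact List.mem_append_left _ hx') v
            (List.mem_append_left _ hv2)
        · rw [List.mem_singleton] at hx'
          rw [hy, hx', hdu, hdv]
          exact Nat.succ_le_succ (hcr1 u hu1 v (List.mem_append_left _ hv2))
    have hA : q1.support.length + 1 ≤ m := by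
      have := hm a v _ hApath
        (List.isChain_iff_pairwise.mpr (List.pairwise_map.mpr hAmono))
      rwa [hAsup, List.length_append, List.length_singleton] at this
    -- segment B
    have hq2path : q2'.IsPath := (hp.of_append_right.of_append_left).of_cons
    have hBmono : q2'.support.Pairwise (fun x y => f x ≤ f y) := by
      rw [← e2]
      exact pw_bump (by rw [e2]; exact hP2) (fun x hx => hd x (ht2 x hx).1 (ht2 x hx).2) hfv
    have hB : q2'.support.length ≤ m := seg_le hle hm q2' hq2path hBmono
    -- segment C
    have hq3path : q3.IsPath := hp.of_append_right.of_append_right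
    have hCmono : q3.support.tail.Pairwise (fun x y => f x ≤ f y) :=
      pw_shift hP3 (fun x hx => hd x (fun hh => hunot3 (hh ▸ hx)) (fun hh => hvnot3 (hh ▸ hx)))
    have hC : q3.support.tail.length ≤ m := tail_seg_le hle hm q3 hq3path hCmono
    simp only [List.length_append]
    omega

private lemma core2 {V : Type*} {G H : SimpleGraph V} (hle : H ≤ G) {u v : V}
    {f f' : V → ℕ}
    (hdu : f u = f' u + 1)
    (hd : ∀ x, x ≠ u → x ≠ v → f x = f' x)
    {m : ℕ}
    (hm : ∀ (c d : V) (q : G.Walk c d), q.IsPath →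
      List.Chain' (· ≤ ·) (q.support.map f) → q.support.length ≤ m)
    {a b : V} (q1 : H.Walk a u) (q2 : H.Walk u b)
    (hp : (q1.append q2).IsPath)
    (hmono : List.Chain' (· ≤ ·) ((q1.append q2).support.map f'))
    (hv : v ∉ (q1.append q2).support) :
    (q1.append q2).support.length ≤ 2 * m := by
  have hS : (q1.append q2).support = q1.support ++ q2.support.tail :=
    Walk.support_append _ _
  rw [hS] at hmono hv ⊢
  have hnd : (q1.support ++ q2.support.tail).Nodup := by
    have := hp.support_nodup; rwa [hS] at this
  rw [List.nodup_append] at hnd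
  obtain ⟨hnd1, hnd2, hdisj⟩ := hnd
  have hP : (q1.support ++ q2.support.tail).Pairwise (fun x y => f' x ≤ f' y) :=
    List.pairwise_map.mp (List.isChain_iff_pairwise.mp hmono)
  rw [List.pairwise_append] at hP
  obtain ⟨hP1, hP2, -⟩ := hP
  have hu1 : u ∈ q1.support := q1.end_mem_support
  have hvnot1 : v ∉ q1.support := fun h => hv (List.mem_append_left _ h)
  have hvnot2 : v ∉ q2.support.tail := fun h => hv (List.mem_append_right _ h)
  have hunot2 : u ∉ q2.support.tail := fun h => hdisj _ hu1 _ h rfl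
  have e1 : q1.support.dropLast ++ [u] = q1.support := (support_eq_dropLast q1).symm
  have ht1 : ∀ x ∈ q1.support.dropLast, x ≠ u ∧ x ≠ v := by
    intro x hx
    have hxs1 : x ∈ q1.support := by rw [← e1]; exact List.mem_append_left _ hx
    refine ⟨?_, fun hh => hvnot1 (hh ▸ hxs1)⟩
    rintro rfl
    have := hnd1
    rw [← e1, List.nodup_append] at this
    exact this.2.2 _ hx _ (List.mem_singleton_self _) rfl
  have hfu : f' u ≤ f u := by rw [hdu]; exact Nat.le_succ _
  have hAmono : q1.support.Pairwise (fun x y => f x ≤ f y) := by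
    rw [← e1]
    exact pw_bump (by rw [e1]; exact hP1) (fun x hx => hd x (ht1 x hx).1 (ht1 x hx).2) hfu
  have hA : q1.support.length ≤ m := seg_le hle hm q1 hp.of_append_left hAmono
  have hBmono : q2.support.tail.Pairwise (fun x y => f x ≤ f y) :=
    pw_shift hP2 (fun x hx => hd x (fun hh => hunot2 (hh ▸ hx)) (fun hh => hvnot2 (hh ▸ hx)))
  have hB : q2.support.tail.length ≤ m :=
    tail_seg_le hle hm q2 hp.of_append_right hBmono
  rw [List.length_append]
  omega

private lemma deg_aux {V : Type*} [Fintype V] [DecidableEq V] (G : SimpleGraph V)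
    [DecidableRel G.Adj] (u v : V) (he : G.Adj u v)
    [DecidableRel (G.deleteEdges {s(u, v)}).Adj] :
    G.degree u = (G.deleteEdges {s(u, v)}).degree u + 1 ∧
    G.degree v = (G.deleteEdges {s(u, v)}).degree v + 1 ∧
    ∀ x, x ≠ u → x ≠ v → G.degree x = (G.deleteEdges {s(u, v)}).degree x := by
  have hNu : (G.deleteEdges {s(u, v)}).neighborFinset u = (G.neighborFinset u).erase v := by
    ext y
    simp only [mem_neighborFinset, deleteEdges_adj, Set.mem_singleton_iff,
      Finset.mem_erase]
    constructor
    · rintro ⟨h1, h2⟩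
      exact ⟨fun hh => h2 (by rw [hh]), h1⟩
    · rintro ⟨h1, h2⟩
      exact ⟨h2, fun hh => h1 (Sym2.congr_right.mp hh)⟩
  have hNv : (G.deleteEdges {s(u, v)}).neighborFinset v = (G.neighborFinset v).erase u := by
    ext y
    simp only [mem_neighborFinset, deleteEdges_adj, Set.mem_singleton_iff,
      Finset.mem_erase]
    constructor
    · rintro ⟨h1, h2⟩
      exact ⟨fun hh => h2 (by rw [hh, Sym2.eq_swap]), h1⟩
    · rintro ⟨h1, h2⟩
      refine ⟨h2, fun hh => h1 ?_⟩
      rw [show s(u, v) = s(v, u) from Sym2.eq_swap] at hh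
      exact Sym2.congr_right.mp hh
  refine ⟨?_, ?_, ?_⟩
  · have hvmem : v ∈ G.neighborFinset u := by rwa [mem_neighborFinset]
    have : (G.deleteEdges {s(u, v)}).degree u = G.degree u - 1 := by
      unfold SimpleGraph.degree
      rw [hNu, Finset.card_erase_of_mem hvmem]
    have hpos : 1 ≤ G.degree u := by
      have : 0 < (G.neighborFinset u).card := Finset.card_pos.mpr ⟨v, hvmem⟩
      exact this
    omega
  · have humem : u ∈ G.neighborFinset v := by rw [mem_neighborFinset]; exact he.symm
    have : (G.deleteEdges {s(u, v)}).degree v = G.degree v - 1 := by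
      unfold SimpleGraph.degree
      rw [hNv, Finset.card_erase_of_mem humem]
    have hpos : 1 ≤ G.degree v := by
      have : 0 < (G.neighborFinset v).card := Finset.card_pos.mpr ⟨u, humem⟩
      exact this
    omega
  · intro x hxu hxv
    unfold SimpleGraph.degree
    congr 1
    ext y
    simp only [mem_neighborFinset, deleteEdges_adj, Set.mem_singleton_iff]
    constructor
    · intro h
      refine ⟨h, fun hh => ?_⟩
      rw [Sym2.eq_iff] at hh
      rcases hh with ⟨rfl, rfl⟩ | ⟨rfl, rfl⟩
      · exact hxu rfl
      · exact hxv rfl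
    · exact fun h => h.1

theorem mp_delete_edge_le {V : Type*} [Fintype V] (G : SimpleGraph V) (u v : V)
    (he : G.Adj u v) :
    mp (G.deleteEdges {s(u, v)}) ≤ 3 * mp G - 1 := by
  letI : DecidableEq V := Classical.decEq _
  letI : DecidableRel G.Adj := Classical.decRel _
  letI : DecidableRel (G.deleteEdges {s(u, v)}).Adj := Classical.decRel _
  have hle : G.deleteEdges {s(u, v)} ≤ G := deleteEdges_le _
  obtain ⟨h1, h2, h3⟩ := deg_aux G u v he
  unfold mp
  refine csSup_le' ?_
  rintro n ⟨a, b, p, hp, hmono, rfl⟩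
  set f : V → ℕ := fun x => G.degree x with hf
  set f' : V → ℕ := fun x => (G.deleteEdges {s(u, v)}).degree x with hf'
  set m : ℕ := sSup {n : ℕ | ∃ (c d : V) (q : G.Walk c d), q.IsPath ∧
    (List.Chain' (· ≤ ·) (q.support.map f) ∨
     List.Chain' (· ≥ ·) (q.support.map f)) ∧ q.support.length = n} with hmdef
  have bdd : BddAbove {n : ℕ | ∃ (c d : V) (q : G.Walk c d), q.IsPath ∧
      (List.Chain' (· ≤ ·) (q.support.map f) ∨
       List.Chain' (· ≥ ·) (q.support.map f)) ∧ q.support.length = n} := by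
    refine ⟨Fintype.card V, ?_⟩
    rintro k ⟨c, d, q, hq, -, rfl⟩
    exact hq.support_nodup.length_le_card
  have hm : ∀ (c d : V) (q : G.Walk c d), q.IsPath →
      List.Chain' (· ≤ ·) (q.support.map f) → q.support.length ≤ m :=
    fun c d q hq hc => le_csSup bdd ⟨c, d, q, hq, Or.inl hc, rfl⟩
  have m1 : 1 ≤ m := by
    have := hm u u Walk.nil Walk.IsPath.nil (List.isChain_singleton _)
    simpa using this
  obtain ⟨a', b', p', hp', hchain, hlen⟩ :
      ∃ (a' b' : V) (p' : (G.deleteEdges {s(u, v)}).Walk a' b'), p'.IsPath ∧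
        List.Chain' (· ≤ ·) (p'.support.map f') ∧ p'.support.length = p.support.length := by
    rcases hmono with hc | hc
    · exact ⟨a, b, p, hp, hc, rfl⟩
    · refine ⟨b, a, p.reverse, hp.reverse, ?_, by simp⟩
      rw [Walk.support_reverse, List.map_reverse]
      exact List.isChain_reverse.mpr hc
  rw [← hlen]
  by_cases hu : u ∈ p'.support
  · by_cases hv : v ∈ p'.support
    · have hspec : (p'.takeUntil u hu).append (p'.dropUntil u hu) = p' := p'.take_spec hu
      by_cases hvd : v ∈ (p'.dropUntil u hu).support
      · have hEq : (p'.takeUntil u hu).append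
            (((p'.dropUntil u hu).takeUntil v hvd).append
              ((p'.dropUntil u hu).dropUntil v hvd)) = p' := by
          rw [(p'.dropUntil u hu).take_spec hvd]; exact hspec
        rw [← hEq] at hp' hchain ⊢
        exact core hle he h1 h2 h3 hm _ _ _ hp' hchain
      · have hvt : v ∈ (p'.takeUntil u hu).support := by
          have hsup : p'.support
              = (p'.takeUntil u hu).support ++ (p'.dropUntil u hu).support.tail := by
            conv_lhs => rw [← hspec]
            rw [Walk.support_append]
          rw [hsup] at hv
          rcases List.mem_append.mp hv with h | h
          · exact h
          · exact absurd (List.mem_of_mem_tail h) hvd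
        have hEq : ((p'.takeUntil u hu).takeUntil v hvt).append
            (((p'.takeUntil u hu).dropUntil v hvt).append (p'.dropUntil u hu)) = p' := by
          rw [Walk.append_assoc, (p'.takeUntil u hu).take_spec hvt]; exact hspec
        rw [← hEq] at hp' hchain ⊢
        exact core hle he.symm h2 h1 (fun x hx1 hx2 => h3 x hx2 hx1) hm _ _ _ hp' hchain
    · have hspec : (p'.takeUntil u hu).append (p'.dropUntil u hu) = p' := p'.take_spec hu
      rw [← hspec] at hp' hchain hv ⊢
      have := core2 hle h1 h3 hm _ _ hp' hchain hv
      omega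
  · by_cases hv : v ∈ p'.support
    · have hspec : (p'.takeUntil v hv).append (p'.dropUntil v hv) = p' := p'.take_spec hv
      rw [← hspec] at hp' hchain hu ⊢
      have := core2 hle h2 (fun x hx1 hx2 => h3 x hx2 hx1) hm _ _ hp' hchain hu
      omega
    · have hPall : p'.support.Pairwise (fun x y => f' x ≤ f' y) :=
        List.pairwise_map.mp (List.isChain_iff_pairwise.mp hchain)
      have := seg_le hle hm p' hp'
        (pw_shift hPall (fun x hx =>
          h3 x (fun hh => hu (hh ▸ hx)) (fun hh => hv (hh ▸ hx))))
      omega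
end

section
/- For every graph G and every edge e added between two non-adjacent vertices, mp(G+e) ≥ (mp(G)+1)/3. -/
open SimpleGraph

section Aux

open scoped List

variable {V : Type*} [Fintype V]

private def MPSet (G : SimpleGraph V) [DecidableRel G.Adj] : Set ℕ :=
  {n : ℕ | ∃ (u v : V) (p : G.Walk u v), p.IsPath ∧
    (List.Chain' (· ≤ ·) (p.support.map (fun x => G.degree x)) ∨
     List.Chain' (· ≥ ·) (p.support.map (fun x => G.degree x))) ∧ p.support.length = n}

private lemma chain_bump {m : List ℕ} {c d : ℕ}
    (h : List.Chain' (· ≤ ·) (m ++ [c])) (hcd : c ≤ d) :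
    List.Chain' (· ≤ ·) (m ++ [d]) := by
  unfold List.Chain' at h ⊢
  rw [List.isChain_append] at h ⊢
  refine ⟨h.1, List.isChain_singleton _, ?_⟩
  intro x hx y hy
  simp only [List.head?_cons, Option.mem_def, Option.some.injEq] at hy
  subst hy
  exact (h.2.2 x hx c (by simp)).trans hcd

private lemma chain_ext {m : List ℕ} {c d : ℕ}
    (h : List.Chain' (· ≤ ·) (m ++ [c])) (hcd : c ≤ d) :
    List.Chain' (· ≤ ·) ((m ++ [c]) ++ [d]) := by
  unfold List.Chain'
  rw [List.isChain_append]
  refine ⟨h, List.isChain_singleton _, ?_⟩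
  intro x hx y hy
  simp only [List.head?_cons, Option.mem_def, Option.some.injEq] at hy
  subst hy
  rw [List.getLast?_concat] at hx
  simp only [Option.mem_def, Option.some.injEq] at hx
  subst hx
  exact hcd

private lemma aux_pref {α : Type*} {l1 l2 : List α} {u v : α}
    (hp : l1 ++ [u] <+: l2 ++ [v]) (hnd : (l2 ++ [v]).Nodup) (huv : u ≠ v) :
    v ∉ l1 := by
  intro hv
  have hvl2 : v ∉ l2 := by
    rw [List.nodup_append] at hnd
    intro h
    exact hnd.2.2 _ h _ (List.mem_singleton_self _) rfl
  have hlen := hp.length_le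
  simp only [List.length_append, List.length_singleton] at hlen
  rcases lt_or_eq_of_le (by omega : l1.length ≤ l2.length) with h | h
  · have hpre : l1 ++ [u] <+: l2 :=
      List.prefix_of_prefix_length_le hp (List.prefix_append _ _) (by simp; omega)
    exact hvl2 (hpre.subset (by simp [hv]))
  · have heq : l1 ++ [u] = l2 ++ [v] := List.IsPrefix.eq_of_length hp (by simp [h])
    have := congrArg List.getLast? heq
    rw [List.getLast?_concat, List.getLast?_concat] at this
    exact huv (Option.some.injEq _ _ ▸ this : u = v)

private lemma prefix_dichotomy {α : Type*} {l l1 l2 : List α} {u v : α}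
    (h1 : l1 ++ [u] <+: l) (h2 : l2 ++ [v] <+: l) (hl : l.Nodup) (huv : u ≠ v) :
    v ∉ l1 ∨ u ∉ l2 := by
  rcases List.prefix_or_prefix_of_prefix h1 h2 with hp | hp
  · exact Or.inl (aux_pref hp (hl.sublist h2.sublist) huv)
  · exact Or.inr (aux_pref hp (hl.sublist h1.sublist) huv.symm)

private lemma support_last {W : Type*} {G : SimpleGraph W} {a c : W} (p : G.Walk a c) :
    ∃ l, p.support = l ++ [c] := by
  have h : p.support.reverse = c :: p.reverse.support.tail := by
    rw [← Walk.support_reverse]; exact p.reverse.support_eq_cons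
  refine ⟨p.reverse.support.tail.reverse, ?_⟩
  rw [← List.reverse_reverse p.support, h, List.reverse_cons]

private lemma support_cons_decomp {W : Type*} {G : SimpleGraph W} {a c : W} (p : G.Walk a c)
    (h : p.support.tail ≠ []) :
    ∃ (w : W) (_ : G.Adj a w) (q : G.Walk w c), p.support = a :: q.support ∧
      (p.IsPath → q.IsPath ∧ a ∉ q.support) := by
  cases p with
  | nil => simp at h
  | cons hadj q =>
    exact ⟨_, hadj, q, by simp,
      fun hp => ⟨hp.of_cons, ((Walk.cons_isPath_iff _ _).1 hp).2⟩⟩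

private lemma support_mapLe {W : Type*} {G G' : SimpleGraph W} (h : G ≤ G') {a c : W}
    (p : G.Walk a c) : (p.mapLe h).support = p.support := by
  rw [Walk.mapLe, Walk.support_map]
  exact List.map_id' _

/-- The case where both `x` and `y` lie on `P`, with `x` coming first. -/
private lemma key_both (G G' : SimpleGraph V) [DecidableRel G.Adj] [DecidableRel G'.Adj]
    [DecidableEq V] (hle : G ≤ G') (x y : V) (hxy : G'.Adj x y)
    (hdx : G'.degree x = G.degree x + 1) (hdy : G'.degree y = G.degree y + 1)
    (hd : ∀ w, w ≠ x → w ≠ y → G'.degree w = G.degree w)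
    {a b : V} (P : G.Walk a b) (hP : P.IsPath)
    (hch : List.Chain' (· ≤ ·) (P.support.map (fun z => G.degree z)))
    (hx : x ∈ P.support) (hy : y ∈ P.support) (hyA : y ∉ (P.takeUntil x hx).support) :

    ∃ n ∈ MPSet G', P.support.length + 1 ≤ 3 * n := by
  set A := P.takeUntil x hx with hA
  set B := P.dropUntil x hx with hB
  have hsupP : P.support = A.support ++ B.support.tail := by
    rw [hA, hB, ← Walk.support_append, P.take_spec hx]
  have hAp : A.IsPath := hP.takeUntil hx
  have hBp : B.IsPath := hP.dropUntil hx
  have hxyne : x ≠ y := by rintro rfl; exact hyA (Walk.end_mem_support A)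
  have hyB : y ∈ B.support.tail := by
    rcases List.mem_append.1 (hsupP ▸ hy) with h | h
    · exact absurd h hyA
    · exact h
  have hyB' : y ∈ B.support := List.mem_of_mem_tail hyB
  set R := B.takeUntil y hyB' with hR
  set S := B.dropUntil y hyB' with hS
  have hsupB : B.support = R.support ++ S.support.tail := by
    rw [hR, hS, ← Walk.support_append, B.take_spec hyB']
  have hRp : R.IsPath := hBp.takeUntil hyB'
  have hSp : S.IsPath := hBp.dropUntil hyB'
  have hndA : A.support.Nodup := (Walk.isPath_def A).1 hAp
  have hndB : B.support.Nodup := (Walk.isPath_def B).1 hBp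
  obtain ⟨l1, hl1⟩ := support_last A
  have hxl1 : x ∉ l1 := by
    rw [hl1, List.nodup_append] at hndA
    exact fun h => hndA.2.2 _ h _ (List.mem_singleton_self _) rfl
  have hyl1 : y ∉ l1 := fun h => hyA (by rw [hl1]; exact List.mem_append_left _ h)
  have hxB : x ∉ B.support.tail := by
    have h := hndB
    rw [B.support_eq_cons, List.nodup_cons] at h
    exact h.1
  have hpw : ∀ z ∈ A.support, ∀ w ∈ B.support.tail, G.degree z ≤ G.degree w := by
    have hpair := List.isChain_iff_pairwise.1 hch
    rw [List.pairwise_map] at hpair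
    rw [hsupP, List.pairwise_append] at hpair
    exact hpair.2.2
  have hfxy : G.degree x ≤ G.degree y := hpw x (Walk.end_mem_support A) y hyB
  have hAsub : A.support <+ P.support := by rw [hsupP]; exact (List.prefix_append _ _).sublist
  have hchA : List.Chain' (· ≤ ·) (A.support.map (fun z => G.degree z)) :=
    hch.sublist (hAsub.map _)
  -- first piece: A extended by the new edge to y
  have hW1sup : ((A.mapLe hle).concat hxy).support = A.support ++ [y] := by
    rw [Walk.support_concat, support_mapLe]
  have hW1path : ((A.mapLe hle).concat hxy).IsPath := by
    rw [Walk.isPath_def, hW1sup, List.nodup_append]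
    refine ⟨hndA, List.nodup_singleton _, ?_⟩
    intro z hz w hzy
    rw [List.mem_singleton] at hzy
    subst hzy
    rintro rfl
    exact hyA hz
  have hchW1 : List.Chain' (· ≤ ·)
      (((A.mapLe hle).concat hxy).support.map (fun z => G'.degree z)) := by
    have h1 : l1.map (fun z => G'.degree z) = l1.map (fun z => G.degree z) :=
      List.map_congr_left fun z hz => hd z (fun h => hxl1 (h ▸ hz)) (fun h => hyl1 (h ▸ hz))
    rw [hW1sup, hl1, List.map_append, List.map_append, h1, List.map_singleton,
      List.map_singleton, hdx, hdy]
    rw [hl1, List.map_append, List.map_singleton] at hchA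
    exact chain_ext (chain_bump hchA (Nat.le_succ _)) (Nat.succ_le_succ hfxy)
  have hmem1 : (A.support.length + 1) ∈ MPSet G' :=
    ⟨a, y, (A.mapLe hle).concat hxy, hW1path, Or.inl hchW1, by rw [hW1sup]; simp⟩
  -- second piece: R minus its first vertex
  have hRt : R.support.tail ≠ [] := by
    intro h
    have h2 := R.support_eq_cons
    rw [h] at h2
    have h3 : y ∈ R.support := Walk.end_mem_support R
    rw [h2, List.mem_singleton] at h3
    exact hxyne h3.symm
  obtain ⟨w2, hadj2, q2, hq2sup, hq2pp⟩ := support_cons_decomp R hRt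
  obtain ⟨hq2p, hxq2⟩ := hq2pp hRp
  have hBtail : B.support.tail = q2.support ++ S.support.tail := by
    have h2 : B.support = x :: (q2.support ++ S.support.tail) := by
      rw [hsupB, hq2sup]; rfl
    have := congrArg List.tail h2
    simpa using this
  have hq2subP : q2.support <+ P.support := by
    rw [hsupP, hBtail]
    exact ((List.prefix_append _ _).sublist).trans (List.sublist_append_right _ _)
  have hchq2 : List.Chain' (· ≤ ·) (q2.support.map (fun z => G.degree z)) :=
    hch.sublist (hq2subP.map _)
  obtain ⟨l2, hl2⟩ := support_last q2
  have hndq2 := (Walk.isPath_def q2).1 hq2p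
  have hyl2 : y ∉ l2 := by
    rw [hl2, List.nodup_append] at hndq2
    exact fun h => hndq2.2.2 _ h _ (List.mem_singleton_self _) rfl
  have hxl2 : x ∉ l2 := fun h => hxq2 (by rw [hl2]; exact List.mem_append_left _ h)
  have hchq2' : List.Chain' (· ≤ ·) (q2.support.map (fun z => G'.degree z)) := by
    have h1 : l2.map (fun z => G'.degree z) = l2.map (fun z => G.degree z) :=
      List.map_congr_left fun z hz => hd z (fun h => hxl2 (h ▸ hz)) (fun h => hyl2 (h ▸ hz))
    rw [hl2, List.map_append, h1, List.map_singleton, hdy]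
    rw [hl2, List.map_append, List.map_singleton] at hchq2
    exact chain_bump hchq2 (Nat.le_succ _)
  have hmem2 : q2.support.length ∈ MPSet G' :=
    ⟨w2, y, q2.mapLe hle, (Walk.mapLe_isPath hle).2 hq2p,
      Or.inl (by rw [support_mapLe]; exact hchq2'), by rw [support_mapLe]⟩
  have hsum1 : P.support.length = A.support.length + q2.support.length
      + S.support.tail.length := by
    rw [hsupP, hBtail, List.length_append, List.length_append]
    omega
  by_cases hSt : S.support.tail = []
  · have hS0 : S.support.tail.length = 0 := by rw [hSt]; rfl
    rcases le_total (A.support.length + 1) q2.support.length with h | h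
    · exact ⟨_, hmem2, by omega⟩
    · exact ⟨_, hmem1, by omega⟩
  · obtain ⟨w3, hadj3, q3, hq3sup, hq3pp⟩ := support_cons_decomp S hSt
    obtain ⟨hq3p, hyq3⟩ := hq3pp hSp
    have hq3eq : S.support.tail = q3.support := by rw [hq3sup, List.tail_cons]
    have hq3subP : q3.support <+ P.support := by
      rw [hsupP, hBtail, ← hq3eq]
      exact ((List.suffix_append _ _).trans (List.suffix_append _ _)).sublist
    have hchq3 : List.Chain' (· ≤ ·) (q3.support.map (fun z => G.degree z)) :=
      hch.sublist (hq3subP.map _)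
    have hxq3 : x ∉ q3.support := fun h =>
      hxB (by rw [hBtail, ← hq3eq] at *; exact List.mem_append_right _ h)
    have hmapq3 : q3.support.map (fun z => G'.degree z)
        = q3.support.map (fun z => G.degree z) :=
      List.map_congr_left fun z hz => hd z (fun h => hxq3 (h ▸ hz)) (fun h => hyq3 (h ▸ hz))
    have hmem3 : q3.support.length ∈ MPSet G' :=
      ⟨w3, b, q3.mapLe hle, (Walk.mapLe_isPath hle).2 hq3p,
        Or.inl (by rw [support_mapLe, hmapq3]; exact hchq3), by rw [support_mapLe]⟩
    have hq3len : S.support.tail.length = q3.support.length := by rw [hq3eq]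
    rcases le_total (A.support.length + 1) q2.support.length with h12 | h12
    · rcases le_total q2.support.length q3.support.length with h23 | h23
      · exact ⟨_, hmem3, by omega⟩
      · exact ⟨_, hmem2, by omega⟩
    · rcases le_total (A.support.length + 1) q3.support.length with h13 | h13
      · exact ⟨_, hmem3, by omega⟩
      · exact ⟨_, hmem1, by omega⟩

/-- The case where `x` lies on `P` and `y` does not. -/
private lemma key_one (G G' : SimpleGraph V) [DecidableRel G.Adj] [DecidableRel G'.Adj]
    [DecidableEq V] (hle : G ≤ G') (x y : V)
    (hdx : G'.degree x = G.degree x + 1)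
    (hd : ∀ w, w ≠ x → w ≠ y → G'.degree w = G.degree w)
    {a b : V} (P : G.Walk a b) (hP : P.IsPath)
    (hch : List.Chain' (· ≤ ·) (P.support.map (fun z => G.degree z)))
    (hx : x ∈ P.support) (hy : y ∉ P.support) :

    ∃ n ∈ MPSet G', P.support.length + 1 ≤ 3 * n := by
  set A := P.takeUntil x hx with hA
  set B := P.dropUntil x hx with hB
  have hsupP : P.support = A.support ++ B.support.tail := by
    rw [hA, hB, ← Walk.support_append, P.take_spec hx]
  have hAp : A.IsPath := hP.takeUntil hx
  have hBp : B.IsPath := hP.dropUntil hx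
  have hndA : A.support.Nodup := (Walk.isPath_def A).1 hAp
  have hndB : B.support.Nodup := (Walk.isPath_def B).1 hBp
  obtain ⟨l1, hl1⟩ := support_last A
  have hxl1 : x ∉ l1 := by
    rw [hl1, List.nodup_append] at hndA
    exact fun h => hndA.2.2 _ h _ (List.mem_singleton_self _) rfl
  have hyl1 : y ∉ l1 := fun h => hy (by
    rw [hsupP]
    exact List.mem_append_left _ (by rw [hl1]; exact List.mem_append_left _ h))
  have hAsub : A.support <+ P.support := by rw [hsupP]; exact (List.prefix_append _ _).sublist
  have hchA : List.Chain' (· ≤ ·) (A.support.map (fun z => G.degree z)) :=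
    hch.sublist (hAsub.map _)
  have hchA' : List.Chain' (· ≤ ·) (A.support.map (fun z => G'.degree z)) := by
    have h1 : l1.map (fun z => G'.degree z) = l1.map (fun z => G.degree z) :=
      List.map_congr_left fun z hz => hd z (fun h => hxl1 (h ▸ hz)) (fun h => hyl1 (h ▸ hz))
    rw [hl1, List.map_append, h1, List.map_singleton, hdx]
    rw [hl1, List.map_append, List.map_singleton] at hchA
    exact chain_bump hchA (Nat.le_succ _)
  have hmem1 : A.support.length ∈ MPSet G' :=
    ⟨a, x, A.mapLe hle, (Walk.mapLe_isPath hle).2 hAp,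
      Or.inl (by rw [support_mapLe]; exact hchA'), by rw [support_mapLe]⟩
  have hlen1 : 1 ≤ A.support.length := List.length_pos_iff.2 A.support_ne_nil
  by_cases hBt : B.support.tail = []
  · have hPA : P.support.length = A.support.length := by
      rw [hsupP, hBt, List.append_nil]
    exact ⟨_, hmem1, by omega⟩
  · obtain ⟨w2, hadj2, q2, hq2sup, hq2pp⟩ := support_cons_decomp B hBt
    obtain ⟨hq2p, hxq2⟩ := hq2pp hBp
    have hq2eq : B.support.tail = q2.support := by rw [hq2sup, List.tail_cons]
    have hq2subP : q2.support <+ P.support := by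
      rw [hsupP, hq2eq]
      exact (List.suffix_append _ _).sublist
    have hchq2 : List.Chain' (· ≤ ·) (q2.support.map (fun z => G.degree z)) :=
      hch.sublist (hq2subP.map _)
    have hyq2 : y ∉ q2.support := fun h => hy (by
      rw [hsupP, hq2eq]; exact List.mem_append_right _ h)
    have hmapq2 : q2.support.map (fun z => G'.degree z)
        = q2.support.map (fun z => G.degree z) :=
      List.map_congr_left fun z hz => hd z (fun h => hxq2 (h ▸ hz)) (fun h => hyq2 (h ▸ hz))
    have hmem2 : q2.support.length ∈ MPSet G' :=
      ⟨w2, b, q2.mapLe hle, (Walk.mapLe_isPath hle).2 hq2p,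
        Or.inl (by rw [support_mapLe, hmapq2]; exact hchq2), by rw [support_mapLe]⟩
    have hsum : P.support.length = A.support.length + q2.support.length := by
      rw [hsupP, hq2eq, List.length_append]
    rcases le_total A.support.length q2.support.length with h | h
    · exact ⟨_, hmem2, by omega⟩
    · exact ⟨_, hmem1, by omega⟩

/-- The case where neither `x` nor `y` lies on `P`. -/
private lemma key_none (G G' : SimpleGraph V) [DecidableRel G.Adj] [DecidableRel G'.Adj]
    (hle : G ≤ G') (x y : V)
    (hd : ∀ w, w ≠ x → w ≠ y → G'.degree w = G.degree w)
    {a b : V} (P : G.Walk a b) (hP : P.IsPath)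
    (hch : List.Chain' (· ≤ ·) (P.support.map (fun z => G.degree z)))
    (hx : x ∉ P.support) (hy : y ∉ P.support) :

    ∃ n ∈ MPSet G', P.support.length + 1 ≤ 3 * n := by
  have hmap : P.support.map (fun z => G'.degree z) = P.support.map (fun z => G.degree z) :=
    List.map_congr_left fun z hz => hd z (fun h => hx (h ▸ hz)) (fun h => hy (h ▸ hz))
  have hmem : P.support.length ∈ MPSet G' :=
    ⟨a, b, P.mapLe hle, (Walk.mapLe_isPath hle).2 hP,
      Or.inl (by rw [support_mapLe, hmap]; exact hch), by rw [support_mapLe]⟩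
  have h1 : 1 ≤ P.support.length := List.length_pos_iff.2 P.support_ne_nil
  exact ⟨_, hmem, by omega⟩

private lemma mpset_bddAbove (G : SimpleGraph V) [DecidableRel G.Adj] : BddAbove (MPSet G) := by
  refine ⟨Fintype.card V, fun n hn => ?_⟩
  obtain ⟨a, b, p, hp, -, hlen⟩ := hn
  exact hlen ▸ ((Walk.isPath_def p).1 hp).length_le_card

private lemma mpset_one (G : SimpleGraph V) [DecidableRel G.Adj] (w : V) : 1 ∈ MPSet G :=
  ⟨w, w, Walk.nil, Walk.IsPath.nil, Or.inl (List.isChain_singleton _), by simp⟩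

private lemma key_all (G G' : SimpleGraph V) [DecidableRel G.Adj] [DecidableRel G'.Adj]
    [DecidableEq V] (hle : G ≤ G') (x y : V) (hxy : G'.Adj x y) (hne : x ≠ y)
    (hdx : G'.degree x = G.degree x + 1) (hdy : G'.degree y = G.degree y + 1)
    (hd : ∀ w, w ≠ x → w ≠ y → G'.degree w = G.degree w)
    {a b : V} (P : G.Walk a b) (hP : P.IsPath)
    (hch : List.Chain' (· ≤ ·) (P.support.map (fun z => G.degree z))) :
    ∃ n ∈ MPSet G', P.support.length + 1 ≤ 3 * n := by
  by_cases hx : x ∈ P.support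
  · by_cases hy : y ∈ P.support
    · obtain ⟨l1, hl1⟩ := support_last (P.takeUntil x hx)
      obtain ⟨l2, hl2⟩ := support_last (P.takeUntil y hy)
      have h1 : l1 ++ [x] <+: P.support := by
        rw [← hl1]
        exact ⟨(P.dropUntil x hx).support.tail, by rw [← Walk.support_append, P.take_spec hx]⟩
      have h2 : l2 ++ [y] <+: P.support := by
        rw [← hl2]
        exact ⟨(P.dropUntil y hy).support.tail, by rw [← Walk.support_append, P.take_spec hy]⟩
      rcases prefix_dichotomy h1 h2 ((Walk.isPath_def P).1 hP) hne with h | h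
      · refine key_both G G' hle x y hxy hdx hdy hd P hP hch hx hy ?_
        rw [hl1]
        intro hmem
        rcases List.mem_append.1 hmem with hm | hm
        · exact h hm
        · rw [List.mem_singleton] at hm; exact hne hm.symm
      · refine key_both G G' hle y x hxy.symm hdy hdx (fun w hw1 hw2 => hd w hw2 hw1)
          P hP hch hy hx ?_
        rw [hl2]
        intro hmem
        rcases List.mem_append.1 hmem with hm | hm
        · exact h hm
        · rw [List.mem_singleton] at hm; exact hne hm
    · exact key_one G G' hle x y hdx hd P hP hch hx hy
  · by_cases hy : y ∈ P.support
    · exact key_one G G' hle y x hdy (fun w hw1 hw2 => hd w hw2 hw1) P hP hch hy hx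
    · exact key_none G G' hle x y hd P hP hch hx hy

end Aux

theorem mp_add_edge_ge {V : Type*} [Fintype V] (G : SimpleGraph V) (u v : V)
    (hne : u ≠ v) (hna : ¬ G.Adj u v) :
    ((mp G : ℚ) + 1) / 3 ≤ (mp (G ⊔ fromEdgeSet {s(u, v)}) : ℚ) := by
  letI : DecidableEq V := Classical.decEq _
  letI : DecidableRel G.Adj := Classical.decRel _
  set G' := G ⊔ fromEdgeSet {s(u, v)} with hG'
  letI : DecidableRel G'.Adj := Classical.decRel _
  have hmpG : mp G = sSup (MPSet G) := rfl
  have hmpG' : mp G' = sSup (MPSet G') := rfl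
  have hadj : G'.Adj u v := by
    rw [hG', sup_adj, fromEdgeSet_adj]
    exact Or.inr ⟨rfl, hne⟩
  have hAdju : ∀ z, G'.Adj u z ↔ z = v ∨ G.Adj u z := by
    intro z
    rw [hG', sup_adj, fromEdgeSet_adj]
    simp only [Set.mem_singleton_iff, Sym2.eq_iff]
    constructor
    · rintro (h | ⟨⟨-, rfl⟩ | ⟨huv', -⟩, -⟩)
      · exact Or.inr h
      · exact Or.inl rfl
      · exact absurd huv' hne
    · rintro (rfl | h)
      · exact Or.inr ⟨Or.inl ⟨trivial, rfl⟩, hne⟩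
      · exact Or.inl h
  have hAdjv : ∀ z, G'.Adj v z ↔ z = u ∨ G.Adj v z := by
    intro z
    rw [hG', sup_adj, fromEdgeSet_adj]
    simp only [Set.mem_singleton_iff, Sym2.eq_iff]
    constructor
    · rintro (h | ⟨⟨hvu, -⟩ | ⟨-, rfl⟩, -⟩)
      · exact Or.inr h
      · exact absurd hvu.symm hne
      · exact Or.inl rfl
    · rintro (rfl | h)
      · exact Or.inr ⟨Or.inr ⟨trivial, rfl⟩, hne.symm⟩
      · exact Or.inl h
  have hdu : G'.degree u = G.degree u + 1 := by
    have hnf : G'.neighborFinset u = insert v (G.neighborFinset u) := by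
      ext z
      rw [mem_neighborFinset, Finset.mem_insert, mem_neighborFinset, hAdju]
    rw [← card_neighborFinset_eq_degree, ← card_neighborFinset_eq_degree, hnf,
      Finset.card_insert_of_notMem (by rw [mem_neighborFinset]; exact hna)]
  have hdv : G'.degree v = G.degree v + 1 := by
    have hnf : G'.neighborFinset v = insert u (G.neighborFinset v) := by
      ext z
      rw [mem_neighborFinset, Finset.mem_insert, mem_neighborFinset, hAdjv]
    rw [← card_neighborFinset_eq_degree, ← card_neighborFinset_eq_degree, hnf,
      Finset.card_insert_of_notMem (by rw [mem_neighborFinset]; exact fun h => hna h.symm)]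
  have hdo : ∀ w, w ≠ u → w ≠ v → G'.degree w = G.degree w := by
    intro w hwu hwv
    have hnf : G'.neighborFinset w = G.neighborFinset w := by
      ext z
      rw [mem_neighborFinset, mem_neighborFinset, hG', sup_adj, fromEdgeSet_adj]
      simp only [Set.mem_singleton_iff, Sym2.eq_iff]
      constructor
      · rintro (h | ⟨⟨hwu', -⟩ | ⟨hwv', -⟩, -⟩)
        · exact h
        · exact absurd hwu' hwu
        · exact absurd hwv' hwv
      · exact fun h => Or.inl h
    rw [← card_neighborFinset_eq_degree, ← card_neighborFinset_eq_degree, hnf]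
  have hGmem : mp G ∈ MPSet G := by
    rw [hmpG]
    exact Nat.sSup_mem ⟨1, mpset_one G u⟩ (mpset_bddAbove G)
  obtain ⟨a, b, P, hP, hch, hlen⟩ := hGmem
  have hkey : ∃ n ∈ MPSet G', P.support.length + 1 ≤ 3 * n := by
    rcases hch with hch | hch
    · exact key_all G G' le_sup_left u v hadj hne hdu hdv hdo P hP hch
    · have hch' : List.Chain' (· ≤ ·) (P.reverse.support.map (fun z => G.degree z)) := by
        rw [Walk.support_reverse, List.map_reverse]
        unfold List.Chain'
        rw [List.isChain_reverse]
        exact hch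
      have := key_all G G' le_sup_left u v hadj hne hdu hdv hdo P.reverse
        ((Walk.isPath_reverse_iff P).2 hP) hch'
      rwa [Walk.support_reverse, List.length_reverse] at this
  obtain ⟨n, hn, h3⟩ := hkey
  have hnle : n ≤ mp G' := by
    rw [hmpG']
    exact le_csSup (mpset_bddAbove G') hn
  have hfin : mp G + 1 ≤ 3 * mp G' := by omega
  rw [div_le_iff₀ (by norm_num : (0:ℚ) < 3)]
  have hq : (mp G : ℚ) + 1 ≤ 3 * (mp G' : ℚ) := by exact_mod_cast hfin
  linarith
end

section
/- For every graph G and every edge e of G, mp(G−e) ≥ mp(G)/3. -/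
open SimpleGraph

section MPHelpers

open SimpleGraph.Walk List

variable {V : Type*} [Fintype V]

private noncomputable def mpSet (G : SimpleGraph V) : Set ℕ :=
  letI : DecidableEq V := Classical.decEq _
  letI : DecidableRel G.Adj := Classical.decRel _
  {n : ℕ | ∃ (u v : V) (p : G.Walk u v), p.IsPath ∧
    (List.Chain' (· ≤ ·) (p.support.map (fun x => G.degree x)) ∨
     List.Chain' (· ≥ ·) (p.support.map (fun x => G.degree x))) ∧ p.support.length = n}

private lemma mp_eq_sSup (G : SimpleGraph V) : mp G = sSup (mpSet G) := rfl

private lemma mpSet_bddAbove (G : SimpleGraph V) : BddAbove (mpSet G) := by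
  refine ⟨Fintype.card V, fun n hn => ?_⟩
  obtain ⟨x, y, q, hq, -, rfl⟩ := hn
  exact hq.support_nodup.length_le_card

private lemma mpSet_mem {G : SimpleGraph V} [i : DecidableRel G.Adj] {x y : V}
    (q : G.Walk x y) (hq : q.IsPath)
    (h : List.Chain' (· ≤ ·) (q.support.map (fun z => G.degree z)) ∨
         List.Chain' (· ≥ ·) (q.support.map (fun z => G.degree z))) :
    q.support.length ∈ mpSet G := by
  refine ⟨x, y, q, hq, ?_, rfl⟩
  have keyfun : (fun z : V => @SimpleGraph.degree V G z
      (@SimpleGraph.neighborSetFintype V G _ (Classical.decRel G.Adj) z))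
      = (fun z => G.degree z) :=
    funext fun z => congrArg (fun inst => @SimpleGraph.degree V G z inst) (Subsingleton.elim _ _)
  rw [keyfun]
  exact h

private lemma le_mp {G : SimpleGraph V} [DecidableRel G.Adj] {x y : V}
    (q : G.Walk x y) (hq : q.IsPath)
    (h : List.Chain' (· ≤ ·) (q.support.map (fun z => G.degree z)) ∨
         List.Chain' (· ≥ ·) (q.support.map (fun z => G.degree z))) :
    q.support.length ≤ mp G := by
  rw [mp_eq_sSup]
  exact le_csSup (mpSet_bddAbove G) (mpSet_mem q hq h)

private lemma deg_del_le (G : SimpleGraph V) [DecidableRel G.Adj] (s : Set (Sym2 V))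
    [DecidableRel (G.deleteEdges s).Adj] (x : V) :
    (G.deleteEdges s).degree x ≤ G.degree x := by
  apply Finset.card_le_card
  intro z hz
  rw [mem_neighborFinset] at hz ⊢
  rw [SimpleGraph.deleteEdges_adj] at hz
  exact hz.1

private lemma deg_del_eq (G : SimpleGraph V) [DecidableRel G.Adj] (u v : V)
    [DecidableRel (G.deleteEdges {s(u, v)}).Adj] {x : V} (hxu : x ≠ u) (hxv : x ≠ v) :
    (G.deleteEdges {s(u, v)}).degree x = G.degree x := by
  have hset : (G.deleteEdges {s(u, v)}).neighborFinset x = G.neighborFinset x := by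
    ext z
    rw [mem_neighborFinset, mem_neighborFinset, SimpleGraph.deleteEdges_adj]
    constructor
    · exact fun h => h.1
    · intro h
      refine ⟨h, ?_⟩
      rw [Set.mem_singleton_iff]
      intro hc
      rw [Sym2.eq_iff] at hc
      rcases hc with ⟨h1, h2⟩ | ⟨h1, h2⟩
      · exact hxu h1
      · exact hxv h1
  rw [← SimpleGraph.card_neighborFinset_eq_degree, ← SimpleGraph.card_neighborFinset_eq_degree,
    hset]

private lemma chain'_le_of_head {a a' : ℕ} {l : List ℕ} (ha : a' ≤ a)
    (h : List.Chain' (· ≤ ·) (a :: l)) : List.Chain' (· ≤ ·) (a' :: l) := by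
  cases l with
  | nil => exact List.isChain_singleton _
  | cons b t =>
    have h' := List.isChain_cons_cons.mp h
    exact List.isChain_cons_cons.mpr ⟨ha.trans h'.1, h'.2⟩

private lemma chain_del (G : SimpleGraph V) [DecidableRel G.Adj] (u v : V)
    [DecidableRel (G.deleteEdges {s(u, v)}).Adj] (l : List V)
    (hl : ∀ w ∈ l.tail, w ≠ u ∧ w ≠ v)
    (hc : List.Chain' (· ≤ ·) (l.map (fun z => G.degree z))) :
    List.Chain' (· ≤ ·) (l.map (fun z => (G.deleteEdges {s(u, v)}).degree z)) := by
  cases l with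
  | nil => exact List.isChain_nil
  | cons x t =>
    have hmap : t.map (fun z => (G.deleteEdges {s(u, v)}).degree z)
        = t.map (fun z => G.degree z) :=
      List.map_congr_left fun w hw => deg_del_eq G u v (hl w hw).1 (hl w hw).2
    rw [List.map_cons, hmap]
    rw [List.map_cons] at hc
    exact chain'_le_of_head (deg_del_le G _ x) hc

private lemma chain_sublist {f : V → ℕ} {L l : List V}
    (hc : List.Chain' (· ≤ ·) (L.map f)) (hl : l <+ L) :
    List.Chain' (· ≤ ·) (l.map f) :=
  List.isChain_iff_pairwise.mpr
    (List.Pairwise.sublist (hl.map f) (List.isChain_iff_pairwise.mp hc))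

private lemma rev_tail_rev {α : Type*} (l : List α) : l.reverse.tail.reverse = l.dropLast := by
  induction l using List.reverseRecOn with
  | nil => simp
  | append_singleton xs x ih => simp

private lemma piece_le (G : SimpleGraph V) [DecidableRel G.Adj] {u v : V} (hne : u ≠ v)
    {x y : V} (r : G.Walk x y) (hr : r.IsPath)
    (htail : ∀ z ∈ r.support.tail, z ≠ u ∧ z ≠ v)
    (hc : List.Chain' (· ≤ ·) (r.support.map (fun z => G.degree z))) :
    r.support.length ≤ mp (G.deleteEdges {s(u, v)}) := by
  haveI : DecidableRel (G.deleteEdges {s(u, v)}).Adj := Classical.decRel _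
  have hE : ∀ e ∈ r.edges, e ∈ (G.deleteEdges {s(u, v)}).edgeSet := by
    intro e he
    rw [SimpleGraph.edgeSet_deleteEdges]
    refine ⟨r.edges_subset_edgeSet he, ?_⟩
    intro hmem
    rw [Set.mem_singleton_iff] at hmem
    subst hmem
    have hu' : u ∈ r.support := r.fst_mem_support_of_mem_edges he
    have hv' : v ∈ r.support := r.snd_mem_support_of_mem_edges he
    rw [Walk.support_eq_cons] at hu' hv'
    rcases List.mem_cons.mp hu' with h1 | h1
    · rcases List.mem_cons.mp hv' with h2 | h2
      · exact hne (h1.trans h2.symm)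
      · exact (htail v h2).2 rfl
    · exact (htail u h1).1 rfl
  have hchain' := chain_del G u v r.support htail hc
  have hq := mpSet_mem (r.transfer _ hE) (hr.transfer hE)
    (Or.inl (by rw [Walk.support_transfer]; exact hchain'))
  rw [Walk.support_transfer] at hq
  rw [mp_eq_sSup]
  exact le_csSup (mpSet_bddAbove _) hq

private lemma piece_dropLast_le (G : SimpleGraph V) [DecidableRel G.Adj] {u v : V} (hne : u ≠ v)
    {x y : V} (r : G.Walk x y) (hr : r.IsPath)
    (htail : ∀ z ∈ r.support.dropLast.tail, z ≠ u ∧ z ≠ v)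
    (hc : List.Chain' (· ≤ ·) (r.support.dropLast.map (fun z => G.degree z))) :
    r.support.dropLast.length ≤ mp (G.deleteEdges {s(u, v)}) := by
  by_cases hnil : r.Nil
  · rw [Walk.nil_iff_support_eq.mp hnil]
    simp
  · have hnr : ¬ r.reverse.Nil := by
      rw [Walk.nil_iff_length_eq, Walk.length_reverse]
      exact fun h0 => hnil (Walk.nil_iff_length_eq.mpr h0)
    have hsup : r.reverse.tail.reverse.support = r.support.dropLast := by
      rw [Walk.support_reverse, Walk.support_tail_of_not_nil _ hnr, Walk.support_reverse]
      exact rev_tail_rev _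
    have hp' : r.reverse.tail.IsPath := by
      have h1 : r.reverse.IsPath := hr.reverse
      rw [← Walk.cons_tail_eq r.reverse hnr] at h1
      exact ((Walk.cons_isPath_iff _ _).mp h1).1
    have hres := piece_le G hne r.reverse.tail.reverse hp'.reverse
      (by rw [hsup]; exact htail) (by rw [hsup]; exact hc)
    rwa [hsup] at hres

private lemma support_split {G : SimpleGraph V} [DecidableEq V] {a b w : V} (p : G.Walk a b)
    (h : w ∈ p.support) :
    p.support = (p.takeUntil w h).support.dropLast ++ (p.dropUntil w h).support := by
  have h1 : (p.takeUntil w h).support.dropLast ++ [w] = (p.takeUntil w h).support := by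
    have h2 := List.dropLast_append_getLast (Walk.support_ne_nil (p.takeUntil w h))
    rwa [Walk.getLast_support] at h2
  calc p.support = (p.takeUntil w h).support ++ (p.dropUntil w h).support.tail := by
        rw [← Walk.support_append, Walk.take_spec]
    _ = ((p.takeUntil w h).support.dropLast ++ [w]) ++ (p.dropUntil w h).support.tail := by
        rw [h1]
    _ = (p.takeUntil w h).support.dropLast ++ (w :: (p.dropUntil w h).support.tail) := by
        rw [List.append_assoc, List.singleton_append]
    _ = _ := by rw [← Walk.support_eq_cons]

private lemma takeUntil_cons {G : SimpleGraph V} [DecidableEq V] {x y z v : V}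
    (r : G.Adj x y) (q : G.Walk y z) (hv : v ∈ (Walk.cons r q).support) (hxv : x ≠ v)
    (hv' : v ∈ q.support) :
    (Walk.cons r q).takeUntil v hv = Walk.cons r (q.takeUntil v hv') := by
  simp only [Walk.takeUntil]
  rw [dif_neg hxv]

private lemma takeUntil_or {G : SimpleGraph V} [DecidableEq V] {a b : V} (p : G.Walk a b)
    (u v : V) (hu : u ∈ p.support) (hv : v ∈ p.support) :
    u ∈ (p.takeUntil v hv).support ∨ v ∈ (p.takeUntil u hu).support := by
  revert hu hv
  induction p with
  | nil =>
    intro hu hv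
    simp only [Walk.support_nil, List.mem_singleton] at hu hv
    subst hu
    subst hv
    exact Or.inl (Walk.end_mem_support _)
  | @cons x y z r q ih =>
    intro hu hv
    by_cases hxu : x = u
    · subst hxu
      exact Or.inl (Walk.start_mem_support _)
    · by_cases hxv : x = v
      · subst hxv
        exact Or.inr (Walk.start_mem_support _)
      · have hu' : u ∈ q.support := by
          rcases List.mem_cons.mp (by simpa using hu) with h | h
          · exact absurd h.symm hxu
          · exact h
        have hv' : v ∈ q.support := by
          rcases List.mem_cons.mp (by simpa using hv) with h | h
          · exact absurd h.symm hxv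
          · exact h
        rcases ih hu' hv' with h | h
        · left
          rw [takeUntil_cons r q hv hxv hv', Walk.support_cons]
          exact List.mem_cons_of_mem _ h
        · right
          rw [takeUntil_cons r q hu hxu hu', Walk.support_cons]
          exact List.mem_cons_of_mem _ h

private lemma one_case (G : SimpleGraph V) [DecidableEq V] [DecidableRel G.Adj]
    {u v : V} (hne : u ≠ v) {a b : V} (p : G.Walk a b) (hp : p.IsPath)
    (hc : List.Chain' (· ≤ ·) (p.support.map (fun z => G.degree z)))
    (hu : u ∈ p.support) (hv : v ∉ p.support) :
    p.support.length ≤ 3 * mp (G.deleteEdges {s(u, v)}) := by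
  set t := p.takeUntil u hu with ht
  set d := p.dropUntil u hu with hd
  have hfull : p.support = t.support.dropLast ++ d.support := support_split p hu
  have hN : (t.support.dropLast ++ d.support).Nodup := by rw [← hfull]; exact hp.support_nodup
  have hdisj : t.support.dropLast.Disjoint d.support := List.disjoint_of_nodup_append hN
  have hdcons : d.support = u :: d.support.tail := Walk.support_eq_cons d
  have hdnodup : d.support.Nodup := (hp.dropUntil hu).support_nodup
  have hund : u ∉ d.support.tail := by
    intro hmem
    have := hdnodup
    rw [hdcons] at this
    exact (List.nodup_cons.mp this).1 hmem
  have lA : t.support.dropLast.length ≤ mp (G.deleteEdges {s(u, v)}) := by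
    refine piece_dropLast_le G hne t (hp.takeUntil hu) ?_ ?_
    · intro z hz
      have hzA : z ∈ t.support.dropLast := (List.tail_sublist _).subset hz
      constructor
      · intro h0
        subst h0
        exact hdisj hzA (hdcons ▸ List.mem_cons_self)
      · intro h0
        subst h0
        exact hv (by rw [hfull]; exact List.mem_append_left _ hzA)
    · exact chain_sublist hc (by rw [hfull]; exact List.sublist_append_left _ _)
  have lC : d.support.length ≤ mp (G.deleteEdges {s(u, v)}) := by
    refine piece_le G hne d (hp.dropUntil hu) ?_ ?_
    · intro z hz
      constructor
      · intro h0; subst h0; exact hund hz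
      · intro h0
        subst h0
        refine hv ?_
        rw [hfull]
        exact List.mem_append_right _ ((List.tail_sublist _).subset hz)
    · exact chain_sublist hc (by rw [hfull]; exact List.sublist_append_right _ _)
  have hlen : p.support.length = t.support.dropLast.length + d.support.length := by
    rw [hfull, List.length_append]
  omega

private lemma both_case (G : SimpleGraph V) [DecidableEq V] [DecidableRel G.Adj]
    {u v : V} (hne : u ≠ v) {a b : V} (p : G.Walk a b) (hp : p.IsPath)
    (hc : List.Chain' (· ≤ ·) (p.support.map (fun z => G.degree z)))
    (hv : v ∈ p.support) (hu : u ∈ (p.takeUntil v hv).support) :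
    p.support.length ≤ 3 * mp (G.deleteEdges {s(u, v)}) := by
  set t := p.takeUntil v hv with htdef
  set d := p.dropUntil v hv with hddef
  set t1 := t.takeUntil u hu with ht1def
  set t2 := t.dropUntil u hu with ht2def
  have hpt : t.IsPath := hp.takeUntil hv
  have hpd : d.IsPath := hp.dropUntil hv
  have hpt1 : t1.IsPath := hpt.takeUntil hu
  have hpt2 : t2.IsPath := hpt.dropUntil hu
  -- t2 : Walk u v is not nil
  have hnil2 : ¬ t2.Nil := Walk.not_nil_of_ne hne
  have hcons2 : t2.support = u :: t2.support.tail := Walk.support_eq_cons t2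
  have htl : t2.support.tail ≠ [] := by
    intro h0
    refine hnil2 (Walk.nil_iff_support_eq.mpr ?_)
    rw [hcons2, h0]
  obtain ⟨c, tl, hctl⟩ := List.exists_cons_of_ne_nil htl
  have hB : t2.support.dropLast = u :: t2.support.tail.dropLast := by
    conv_lhs => rw [hcons2, hctl]
    rw [List.dropLast_cons₂, ← hctl]
  have hC : d.support = v :: d.support.tail := Walk.support_eq_cons d
  have hta : t.support.dropLast = t1.support.dropLast ++ t2.support.dropLast := by
    rw [support_split t hu, List.dropLast_append]
    simp [Walk.support_ne_nil]
    rfl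
  have hfull : p.support = t1.support.dropLast ++
      ((u :: t2.support.tail.dropLast) ++ (v :: d.support.tail)) := by
    rw [support_split p hv, hta, hB, ← List.append_assoc, ← hC]
  -- nodup facts
  have hN : (t1.support.dropLast ++
      ((u :: t2.support.tail.dropLast) ++ (v :: d.support.tail))).Nodup := by
    rw [← hfull]; exact hp.support_nodup
  have hdisjA := List.disjoint_of_nodup_append hN
  have hN2 : ((u :: t2.support.tail.dropLast) ++ (v :: d.support.tail)).Nodup :=
    (List.sublist_append_right _ _).nodup hN
  rw [List.cons_append, List.nodup_cons] at hN2
  obtain ⟨hu_nm, hN3⟩ := hN2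
  have hdisjB := List.disjoint_of_nodup_append hN3
  have hN4 : (v :: d.support.tail).Nodup := (List.sublist_append_right _ _).nodup hN3
  have hv_nm : v ∉ d.support.tail := (List.nodup_cons.mp hN4).1
  -- membership facts
  have zA : ∀ z ∈ t1.support.dropLast, z ≠ u ∧ z ≠ v := by
    intro z hz
    constructor
    · intro h0; subst h0
      exact hdisjA hz (List.mem_append_left _ (List.mem_cons_self))
    · intro h0; subst h0
      exact hdisjA hz (List.mem_append_right _ (List.mem_cons_self))
  have zB : ∀ z ∈ t2.support.tail.dropLast, z ≠ u ∧ z ≠ v := by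
    intro z hz
    constructor
    · intro h0; subst h0
      exact hu_nm (List.mem_append_left _ hz)
    · intro h0; subst h0
      exact hdisjB hz (List.mem_cons_self)
  have zC : ∀ z ∈ d.support.tail, z ≠ u ∧ z ≠ v := by
    intro z hz
    constructor
    · intro h0; subst h0
      exact hu_nm (List.mem_append_right _ (List.mem_cons_of_mem _ hz))
    · intro h0; subst h0
      exact hv_nm hz
  -- sublists
  have sA : t1.support.dropLast <+ p.support := by
    rw [hfull]; exact List.sublist_append_left _ _
  have sB : (u :: t2.support.tail.dropLast) <+ p.support := by
    rw [hfull]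
    exact (List.sublist_append_left _ _).trans (List.sublist_append_right _ _)
  have sC : (v :: d.support.tail) <+ p.support := by
    rw [hfull]
    exact (List.sublist_append_right _ _).trans (List.sublist_append_right _ _)
  -- piece bounds
  have lA : t1.support.dropLast.length ≤ mp (G.deleteEdges {s(u, v)}) := by
    refine piece_dropLast_le G hne t1 hpt1 ?_ (chain_sublist hc sA)
    intro z hz
    exact zA z ((List.tail_sublist _).subset hz)
  have lB : t2.support.dropLast.length ≤ mp (G.deleteEdges {s(u, v)}) := by
    refine piece_dropLast_le G hne t2 hpt2 ?_ ?_
    · intro z hz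
      rw [hB] at hz
      exact zB z (by simpa using hz)
    · rw [hB]
      exact chain_sublist hc sB
  have lC : d.support.length ≤ mp (G.deleteEdges {s(u, v)}) := by
    refine piece_le G hne d hpd ?_ ?_
    · exact zC
    · rw [hC]
      exact chain_sublist hc sC
  have hlen : p.support.length = t1.support.dropLast.length +
      t2.support.dropLast.length + d.support.length := by
    conv_lhs => rw [support_split p hv, hta]
    rw [List.length_append, List.length_append]
  omega

private lemma main_le (G : SimpleGraph V) [DecidableEq V] [DecidableRel G.Adj]
    {u v : V} (hne : u ≠ v) {a b : V} (p : G.Walk a b) (hp : p.IsPath)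
    (hc : List.Chain' (· ≤ ·) (p.support.map (fun z => G.degree z))) :
    p.support.length ≤ 3 * mp (G.deleteEdges {s(u, v)}) := by
  by_cases hu : u ∈ p.support
  · by_cases hv : v ∈ p.support
    · rcases takeUntil_or p u v hu hv with h | h
      · exact both_case G hne p hp hc hv h
      · have hres := both_case G hne.symm p hp hc hu h
        rwa [Sym2.eq_swap] at hres
    · exact one_case G hne p hp hc hu hv
  · by_cases hv : v ∈ p.support
    · have hres := one_case G hne.symm p hp hc hv hu
      rwa [Sym2.eq_swap] at hres
    · have hres := piece_le G hne p hp ?_ hc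
      · omega
      · intro z hz
        have hz' : z ∈ p.support := (List.tail_sublist _).subset hz
        exact ⟨fun h0 => hu (h0 ▸ hz'), fun h0 => hv (h0 ▸ hz')⟩

private lemma mp_le_three (G : SimpleGraph V) {u v : V} (hne : u ≠ v) :
    mp G ≤ 3 * mp (G.deleteEdges {s(u, v)}) := by
  letI : DecidableEq V := Classical.decEq _
  letI : DecidableRel G.Adj := Classical.decRel _
  by_cases hne0 : (mpSet G).Nonempty
  · have hmem := Nat.sSup_mem hne0 (mpSet_bddAbove G)
    rw [← mp_eq_sSup] at hmem
    obtain ⟨a, b, p, hp, hcc, hlen⟩ := hmem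
    rcases hcc with hcc | hcc
    · calc mp G = p.support.length := hlen.symm
        _ ≤ _ := main_le G hne p hp hcc
    · have hrev : List.Chain' (· ≤ ·) (p.reverse.support.map (fun z => G.degree z)) := by
        rw [Walk.support_reverse, List.map_reverse]
        exact List.isChain_reverse.mpr hcc
      have h2 := main_le G hne p.reverse hp.reverse hrev
      rw [Walk.support_reverse, List.length_reverse] at h2
      omega
  · rw [mp_eq_sSup, Set.not_nonempty_iff_eq_empty.mp hne0, csSup_empty]
    exact bot_le

end MPHelpers

theorem mp_delete_edge_ge {V : Type*} [Fintype V] (G : SimpleGraph V) (u v : V)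
    (he : G.Adj u v) :
    (mp G : ℚ) / 3 ≤ (mp (G.deleteEdges {s(u, v)}) : ℚ) := by
  have key : mp G ≤ 3 * mp (G.deleteEdges {s(u, v)}) := mp_le_three G he.ne
  rw [div_le_iff₀ (by norm_num : (0 : ℚ) < 3)]
  have h2 : (mp G : ℚ) ≤ ((3 * mp (G.deleteEdges {s(u, v)}) : ℕ) : ℚ) := by
    exact_mod_cast key
  push_cast at h2
  linarith
end

section
/- For every k ≥ 2 there exists a graph G with mp(G) = k and a non-edge e of G such that mp(G+e) = 3k, i.e., the upper bound mp(G+e) ≤ 3·mp(G) is sharp. -/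
open SimpleGraph Finset List

/-- attachment set for leaves -/
def inS (k a : ℕ) : Prop :=
  a + 1 = k ∨ (k + 1 ≤ a ∧ a + 1 ≤ 2*k) ∨ (2*k + 1 ≤ a ∧ a + 1 ≤ 3*k)

instance (k a : ℕ) : Decidable (inS k a) := by unfold inS; infer_instance

/-- oriented edge relation on ℕ codes -/
def QQ (k a b : ℕ) : Prop := (b = a + 1 ∧ b ≤ 3*k) ∨ (b = 4*k + a ∧ inS k a)

instance (k a b : ℕ) : Decidable (QQ k a b) := by unfold QQ; infer_instance

def AA (k a b : ℕ) : Prop := QQ k a b ∨ QQ k b a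

instance (k a b : ℕ) : Decidable (AA k a b) := by unfold AA; infer_instance

/-- degrees in G -/
def dd (k a : ℕ) : ℕ :=
  if 1 ≤ a ∧ a < 3*k then (if inS k a then 3 else 2)
  else if a = 0 ∨ a = 3*k ∨ (4*k ≤ a ∧ inS k (a - 4*k)) then 1
  else 0

/-- the graph G -/
def GG (k : ℕ) : SimpleGraph (Fin (7*k)) where
  Adj x y := AA k x.val y.val
  symm := by constructor; intro x y h; unfold AA at *; tauto
  loopless := by
    constructor
    intro x h
    have := x.isLt
    unfold AA QQ inS at h; omega

instance (k : ℕ) : DecidableRel (GG k).Adj := fun x y => by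
  show Decidable (AA k x.val y.val); infer_instance

/-- G + e, adjacency -/
def AA' (k a b : ℕ) : Prop := AA k a b ∨ (a = k ∧ b = 2*k) ∨ (a = 2*k ∧ b = k)

instance (k a b : ℕ) : Decidable (AA' k a b) := by unfold AA'; infer_instance

def dd' (k a : ℕ) : ℕ := if a = k ∨ a = 2*k then dd k a + 1 else dd k a

def GG' (k : ℕ) (hk : 2 ≤ k) : SimpleGraph (Fin (7*k)) where
  Adj x y := AA' k x.val y.val
  symm := by constructor; intro x y h; unfold AA' AA at *; tauto
  loopless := by
    constructor
    intro x h
    have := x.isLt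
    unfold AA' AA QQ inS at h; omega

instance (k : ℕ) (hk : 2 ≤ k) : DecidableRel (GG' k hk).Adj := fun x y => by
  show Decidable (AA' k x.val y.val); infer_instance

def core_s4 (k a : ℕ) : Prop := 1 ≤ a ∧ a < 3*k

lemma nbr_unique {k x y z : ℕ} (hk : 2 ≤ k) (hx : ¬ core_s4 k x) (h1 : AA k x y) (h2 : AA k x z) :
    y = z := by
  unfold core_s4 at hx; unfold AA QQ inS at h1 h2; omega

lemma edge_touches_core {k x y : ℕ} (hk : 2 ≤ k) (h : AA k x y) :
    core_s4 k x ∨ core_s4 k y := by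
  unfold core_s4; unfold AA QQ inS at h; omega

lemma core_step {k x y : ℕ} (hx : core_s4 k x) (hy : core_s4 k y) (h : AA k x y) :
    y = x + 1 ∨ x = y + 1 := by
  unfold core_s4 at hx hy; unfold AA QQ inS at h; omega

lemma d_low {k x : ℕ} (hx : ¬ core_s4 k x) : dd k x ≤ 1 := by
  unfold core_s4 at hx; unfold dd inS; split_ifs <;> omega

lemma d_core {k x : ℕ} (hx : core_s4 k x) : 2 ≤ dd k x := by
  unfold core_s4 at hx; unfold dd; split_ifs <;> simp only [inS] at * <;> omega

lemma nbr_unique' {k x y z : ℕ} (hx : ¬ core_s4 k x) (hk : 2 ≤ k)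
    (h1 : AA' k x y) (h2 : AA' k x z) : y = z := by
  unfold core_s4 at hx; unfold AA' AA QQ inS at h1 h2; omega

lemma edge_touches_core' {k x y : ℕ} (hk : 2 ≤ k) (h : AA' k x y) :
    core_s4 k x ∨ core_s4 k y := by
  unfold core_s4; unfold AA' AA QQ inS at h; omega

lemma d'_low {k x : ℕ} (hk : 2 ≤ k) (hx : ¬ core_s4 k x) : dd' k x ≤ 1 := by
  unfold core_s4 at hx; unfold dd' dd inS; split_ifs <;> omega

lemma d'_core {k x : ℕ} (hx : core_s4 k x) : 2 ≤ dd' k x := by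
  unfold core_s4 at hx; unfold dd' dd; split_ifs <;> simp only [inS] at * <;> omega

lemma run (L : List ℕ) (hc : L.Chain' (fun x y => y = x + 1 ∨ x = y + 1))
    (hn : L.Nodup) :
    (∀ i (h : i < L.length), L.get ⟨i, h⟩ = L.headI + i) ∨
    (∀ i (h : i < L.length), L.get ⟨i, h⟩ + i = L.headI) := by
  induction L with
  | nil => left; intro i h; simp at h
  | cons x M ih =>
    match M, hc, hn with
    | [], _, _ =>
      left; intro i h
      simp only [List.length_singleton] at h
      interval_cases i <;> simp
    | y :: N, hc, hn =>
      have hstep : y = x + 1 ∨ x = y + 1 := (List.isChain_cons_cons.mp hc).1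
      have hc2 := (List.isChain_cons_cons.mp hc).2
      have hn2 : (y :: N).Nodup := hn.of_cons
      have hx : x ∉ y :: N := (List.nodup_cons.mp hn).1
      rcases ih hc2 hn2 with hup | hdown
      · rcases hstep with h1 | h1
        · left
          intro i h
          match i with
          | 0 => simp
          | (i+1) =>
            have h' : i < (y :: N).length := by simpa using h
            have := hup i h'
            simp only [List.get_cons_succ]
            simp only [List.headI] at this ⊢
            omega
        · match N with
          | [] =>
            right; intro i h
            match i, h with
            | 0, _ => simp
            | 1, _ => simp; omega
            | (i+2), h => simp at h
          | z :: P =>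
            exfalso
            have h1' : (1:ℕ) < (y :: z :: P).length := by simp
            have := hup 1 h1'
            simp only [List.get_cons_succ, List.headI] at this
            have : z = x := by
              simp only [List.get] at this; omega
            exact hx (by simp [this.symm])
      · rcases hstep with h1 | h1
        · match N with
          | [] =>
            left; intro i h
            match i, h with
            | 0, _ => simp
            | 1, _ => simp; omega
            | (i+2), h => simp at h
          | z :: P =>
            exfalso
            have h1' : (1:ℕ) < (y :: z :: P).length := by simp
            have := hdown 1 h1'
            simp only [List.get_cons_succ, List.headI] at this
            have : z = x := by
              simp only [List.get] at this; omega
            exact hx (by simp [this.symm])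
        · right
          intro i h
          match i with
          | 0 => simp
          | (i+1) =>
            have h' : i < (y :: N).length := by simpa using h
            have := hdown i h'
            simp only [List.get_cons_succ]
            simp only [List.headI] at this ⊢
            omega

lemma AA_symm {k x y : ℕ} (h : AA k x y) : AA k y x := by unfold AA at *; tauto

lemma dd_eval_km1 {k : ℕ} (hk : 2 ≤ k) : dd k (k-1) = 3 := by
  unfold dd; split_ifs <;> simp only [inS] at * <;> omega
lemma dd_eval_k {k : ℕ} (hk : 2 ≤ k) : dd k k = 2 := by
  unfold dd; split_ifs <;> simp only [inS] at * <;> omega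
lemma dd_eval_2km1 {k : ℕ} (hk : 2 ≤ k) : dd k (2*k-1) = 3 := by
  unfold dd; split_ifs <;> simp only [inS] at * <;> omega
lemma dd_eval_2k {k : ℕ} (hk : 2 ≤ k) : dd k (2*k) = 2 := by
  unfold dd; split_ifs <;> simp only [inS] at * <;> omega
lemma dd_eval_km2 {k : ℕ} (hk : 2 ≤ k) : dd k (k-2) ≤ 2 := by
  unfold dd; split_ifs <;> simp only [inS] at * <;> omega
lemma dd_eval_kp1 {k : ℕ} (hk : 2 ≤ k) : dd k (k+1) = 3 := by
  unfold dd; split_ifs <;> simp only [inS] at * <;> omega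
lemma dd_eval_2kp1 {k : ℕ} (hk : 2 ≤ k) : dd k (2*k+1) = 3 := by
  unfold dd; split_ifs <;> simp only [inS] at * <;> omega

lemma up_facts {k : ℕ} (hk : 2 ≤ k) (a0 m : ℕ)
    (hstep : ∀ i, i < m → dd k (a0+i) ≤ dd k (a0+i+1)) :
    ¬(a0 ≤ k-1 ∧ k ≤ a0+m) ∧ ¬(a0 ≤ 2*k-1 ∧ 2*k ≤ a0+m) := by
  constructor
  · rintro ⟨f1, f2⟩
    have ht := hstep (k-1-a0) (by omega)
    have e1 : a0 + (k-1-a0) = k-1 := by omega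
    have e2 : a0 + (k-1-a0) + 1 = k := by omega
    rw [e2, e1, dd_eval_km1 hk, dd_eval_k hk] at ht
    omega
  · rintro ⟨f1, f2⟩
    have ht := hstep (2*k-1-a0) (by omega)
    have e1 : a0 + (2*k-1-a0) = 2*k-1 := by omega
    have e2 : a0 + (2*k-1-a0) + 1 = 2*k := by omega
    rw [e2, e1, dd_eval_2km1 hk, dd_eval_2k hk] at ht
    omega

lemma down_facts {k : ℕ} (hk : 2 ≤ k) (a0 m : ℕ)
    (hstep : ∀ i, i < m → dd k (a0-i) ≤ dd k (a0-(i+1))) :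
    ¬(k-1 ≤ a0 ∧ a0 ≤ k-2+m) ∧ ¬(k+1 ≤ a0 ∧ a0 ≤ k+m) ∧
      ¬(2*k+1 ≤ a0 ∧ a0 ≤ 2*k+m) := by
  refine ⟨?_, ?_, ?_⟩
  · rintro ⟨f1, f2⟩
    have ht := hstep (a0-(k-1)) (by omega)
    have e1 : a0 - (a0-(k-1)) = k-1 := by omega
    have e2 : a0 - (a0-(k-1)+1) = k-2 := by omega
    rw [e1, e2, dd_eval_km1 hk] at ht
    have := dd_eval_km2 (k := k) hk
    omega
  · rintro ⟨f1, f2⟩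
    have ht := hstep (a0-(k+1)) (by omega)
    have e1 : a0 - (a0-(k+1)) = k+1 := by omega
    have e2 : a0 - (a0-(k+1)+1) = k := by omega
    rw [e1, e2, dd_eval_kp1 hk, dd_eval_k hk] at ht
    omega
  · rintro ⟨f1, f2⟩
    have ht := hstep (a0-(2*k+1)) (by omega)
    have e1 : a0 - (a0-(2*k+1)) = 2*k+1 := by omega
    have e2 : a0 - (a0-(2*k+1)+1) = 2*k := by omega
    rw [e1, e2, dd_eval_2kp1 hk, dd_eval_2k hk] at ht
    omega

lemma asc_bound {k : ℕ} (hk : 2 ≤ k) (L : List ℕ) (h7 : ∀ a ∈ L, a < 7*k)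
    (hc : L.Chain' (AA k)) (hn : L.Nodup)
    (hm : (L.map (dd k)).Chain' (· ≤ ·)) : L.length ≤ k := by
  set g : ℕ → ℕ := fun i => L.getD i 0 with hgdef
  set len := L.length with hlen
  by_cases hsmall : len ≤ 1
  · omega
  push_neg at hsmall
  -- basic wrappers
  have hget : ∀ i (h : i < len), L.get ⟨i, h⟩ = g i := by
    intro i h; rw [hgdef]; exact (List.getD_eq_get L 0 ⟨i, h⟩).symm
  have hadj : ∀ i, i + 1 < len → AA k (g i) (g (i+1)) := by
    intro i h
    have := List.isChain_iff_getElem.mp hc i (by omega)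
    rw [← hget i (by omega), ← hget (i+1) (by omega)]; exact this
  have hm' : L.Chain' (fun a b => dd k a ≤ dd k b) := (List.isChain_map (dd k)).mp hm
  have hdeg : ∀ i, i + 1 < len → dd k (g i) ≤ dd k (g (i+1)) := by
    intro i h
    have := List.isChain_iff_getElem.mp hm' i (by omega)
    rw [← hget i (by omega), ← hget (i+1) (by omega)]; exact this
  have h7g : ∀ i, i < len → g i < 7*k := by
    intro i h
    apply h7
    rw [← hget i h]; exact List.get_mem _ _
  have hinj : ∀ i j, i < len → j < len → g i = g j → i = j := by
    intro i j hi hj hij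
    rw [← hget i hi, ← hget j hj] at hij
    have := (hn.get_inj_iff).mp hij
    exact congrArg Fin.val this
  -- last element is core
  have hlast : core_s4 k (g (len - 1)) := by
    by_contra hnc
    have hA := hadj (len - 2) (by omega)
    have e : len - 2 + 1 = len - 1 := by omega
    rw [e] at hA
    rcases edge_touches_core hk hA with h1 | h1
    · have h2 := d_core h1
      have h3 := d_low hnc
      have h4 := hdeg (len - 2) (by omega)
      rw [e] at h4
      omega
    · exact hnc h1
  -- all of the tail is core
  have hcoret : ∀ i, 1 ≤ i → i < len → core_s4 k (g i) := by
    intro i h1 h2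
    rcases eq_or_lt_of_le (show i + 1 ≤ len by omega) with he | hlt
    · have : i = len - 1 := by omega
      rwa [this]
    by_contra hnc
    have hA1 := hadj (i-1) (by omega)
    have e : i - 1 + 1 = i := by omega
    rw [e] at hA1
    have hA2 := hadj i (by omega)
    have := nbr_unique hk hnc (AA_symm hA1) hA2
    have := hinj (i-1) (i+1) (by omega) (by omega) this
    omega
  by_cases hhead : core_s4 k (g 0)
  · -- every element core; L is a ±1 run
    have hcore : ∀ i, i < len → core_s4 k (g i) := by
      intro i h
      rcases Nat.eq_zero_or_pos i with h0 | h0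
      · rwa [h0]
      · exact hcoret i h0 h
    have hpm : L.Chain' (fun x y => y = x + 1 ∨ x = y + 1) := by
      apply List.isChain_iff_getElem.mpr
      intro i h
      have e1 := hget i (by omega); have e2 := hget (i+1) (by omega)
      simp only [List.get_eq_getElem] at e1 e2; rw [e1, e2]
      exact core_step (hcore i (by omega)) (hcore (i+1) (by omega)) (hadj i (by omega))
    have hH : L.headI = g 0 := by
      rcases L with _ | ⟨x, t⟩
      · simp [hlen] at hsmall
      · simp [hgdef]
    rcases run L hpm hn with hup | hdown
    · have hupg : ∀ i, i < len → g i = g 0 + i := by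
        intro i h
        have := hup i h
        rwa [hget i h, hH] at this
      have hb : g 0 + (len - 1) < 3*k := by
        have := (hcore (len-1) (by omega)).2
        rw [hupg (len-1) (by omega)] at this
        exact this
      have hstep : ∀ i, i < len - 1 → dd k (g 0 + i) ≤ dd k (g 0 + i + 1) := by
        intro i h
        have := hdeg i (by omega)
        rwa [hupg i (by omega), hupg (i+1) (by omega), ← Nat.add_assoc] at this
      have hF := up_facts hk (g 0) (len - 1) hstep
      have ha0 := hhead.1
      omega
    · have hdg : ∀ i, i < len → g i + i = g 0 := by
        intro i h
        have := hdown i h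
        rwa [hget i h, hH] at this
      have hb : g 0 < 3*k := hhead.2
      have ha : len - 1 + 1 ≤ g 0 := by
        have h1 := (hcore (len-1) (by omega)).1
        have h2 := hdg (len-1) (by omega)
        omega
      have hstep : ∀ i, i < len - 1 → dd k (g 0 - i) ≤ dd k (g 0 - (i+1)) := by
        intro i h
        have := hdeg i (by omega)
        have e1 : g i = g 0 - i := by have := hdg i (by omega); omega
        have e2 : g (i+1) = g 0 - (i+1) := by have := hdg (i+1) (by omega); omega
        rwa [e1, e2] at this
      have hF := down_facts hk (g 0) (len - 1) hstep
      omega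
  · -- head is a pendant/low vertex, tail is a core run
    have hA0 : AA k (g 0) (g 1) := hadj 0 (by omega)
    have hD : (g 0 = 0 ∧ g 1 = 1) ∨ (g 0 = 3*k ∧ g 1 + 1 = 3*k) ∨
        (g 0 = 4*k + g 1 ∧ (g 1 + 1 = k ∨ (k+1 ≤ g 1 ∧ g 1 + 1 ≤ 2*k) ∨
          (2*k+1 ≤ g 1 ∧ g 1 + 1 ≤ 3*k))) := by
      have h70 := h7g 0 (by omega)
      have h71 := h7g 1 (by omega)
      unfold core_s4 at hhead
      unfold AA QQ inS at hA0
      omega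
    have hTlen : L.tail.length = len - 1 := by simp [hlen]
    have hgt : ∀ i, L.tail.getD i 0 = g (i+1) := by
      intro i
      rcases L with _ | ⟨x, t⟩
      · simp [hgdef]
      · simp [hgdef]
    have hgetT : ∀ i (h : i < L.tail.length), L.tail.get ⟨i, h⟩ = g (i+1) := by
      intro i h
      rw [← List.getD_eq_get L.tail 0 ⟨i, h⟩]
      exact hgt i
    have hpmT : L.tail.Chain' (fun x y => y = x + 1 ∨ x = y + 1) := by
      apply List.isChain_iff_getElem.mpr
      intro i h
      have e1 := hgetT i (by omega); have e2 := hgetT (i+1) (by omega)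
      simp only [List.get_eq_getElem] at e1 e2; rw [e1, e2]
      exact core_step (hcoret (i+1) (by omega) (by omega))
        (hcoret (i+2) (by omega) (by omega)) (hadj (i+1) (by omega))
    have hnT : L.tail.Nodup := hn.sublist (List.tail_sublist L)
    have hHT : L.tail.headI = g 1 := by
      rcases L with _ | ⟨x, t⟩
      · simp [hlen] at hsmall
      · rcases t with _ | ⟨y, t2⟩
        · simp [hlen] at hsmall
        · simp [hgdef]
    rcases run L.tail hpmT hnT with hup | hdown
    · have hupg : ∀ i, i < len - 1 → g (i+1) = g 1 + i := by
        intro i h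
        have := hup i (by omega)
        rwa [hgetT i (by omega), hHT] at this
      have hb : g 1 + (len - 2) < 3*k := by
        have := (hcoret (len-1) (by omega) (by omega)).2
        have e := hupg (len-2) (by omega)
        have e2 : len - 2 + 1 = len - 1 := by omega
        rw [e2] at e
        omega
      have hstep : ∀ i, i < len - 2 → dd k (g 1 + i) ≤ dd k (g 1 + i + 1) := by
        intro i h
        have := hdeg (i+1) (by omega)
        rw [hupg i (by omega), hupg (i+1) (by omega)] at this
        rwa [← Nat.add_assoc] at this
      have hF := up_facts hk (g 1) (len - 2) hstep
      omega
    · have hdg : ∀ i, i < len - 1 → g (i+1) + i = g 1 := by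
        intro i h
        have := hdown i (by omega)
        rwa [hgetT i (by omega), hHT] at this
      have hb : g 1 < 3*k := (hcoret 1 (by omega) (by omega)).2
      have ha : len - 2 + 1 ≤ g 1 := by
        have h1 := (hcoret (len-1) (by omega) (by omega)).1
        have h2 := hdg (len-2) (by omega)
        have e2 : len - 2 + 1 = len - 1 := by omega
        rw [e2] at h2
        omega
      have hstep : ∀ i, i < len - 2 → dd k (g 1 - i) ≤ dd k (g 1 - (i+1)) := by
        intro i h
        have := hdeg (i+1) (by omega)
        rw [show i + 1 + 1 = i + 2 from rfl] at this
        have e1 : g (i+1) = g 1 - i := by have := hdg i (by omega); omega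
        have e2 : g (i+2) = g 1 - (i+1) := by
          have h5 := hdg (i+1) (by omega)
          rw [show i + 1 + 1 = i + 2 from rfl] at h5
          omega
        rwa [e1, e2] at this
      have hF := down_facts hk (g 1) (len - 2) hstep
      omega

lemma asc_bound' {k : ℕ} (hk : 2 ≤ k) (L : List ℕ) (h7 : ∀ a ∈ L, a < 7*k)
    (hc : L.Chain' (AA' k)) (hn : L.Nodup)
    (hm : (L.map (dd' k)).Chain' (· ≤ ·)) : L.length ≤ 3*k := by
  set g : ℕ → ℕ := fun i => L.getD i 0 with hgdef
  set len := L.length with hlen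
  by_cases hsmall : len ≤ 1
  · omega
  push_neg at hsmall
  have hget : ∀ i (h : i < len), L.get ⟨i, h⟩ = g i := by
    intro i h; rw [hgdef]; exact (List.getD_eq_get L 0 ⟨i, h⟩).symm
  have hadj : ∀ i, i + 1 < len → AA' k (g i) (g (i+1)) := by
    intro i h
    have := List.isChain_iff_getElem.mp hc i (by omega)
    rw [← hget i (by omega), ← hget (i+1) (by omega)]; exact this
  have hm' : L.Chain' (fun a b => dd' k a ≤ dd' k b) := (List.isChain_map (dd' k)).mp hm
  have hdeg : ∀ i, i + 1 < len → dd' k (g i) ≤ dd' k (g (i+1)) := by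
    intro i h
    have := List.isChain_iff_getElem.mp hm' i (by omega)
    rw [← hget i (by omega), ← hget (i+1) (by omega)]; exact this
  have hinj : ∀ i j, i < len → j < len → g i = g j → i = j := by
    intro i j hi hj hij
    rw [← hget i hi, ← hget j hj] at hij
    exact congrArg Fin.val ((hn.get_inj_iff).mp hij)
  have hlast : core_s4 k (g (len - 1)) := by
    by_contra hnc
    have hA := hadj (len - 2) (by omega)
    have e : len - 2 + 1 = len - 1 := by omega
    rw [e] at hA
    rcases edge_touches_core' hk hA with h1 | h1
    · have h2 := d'_core h1
      have h3 := d'_low hk hnc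
      have h4 := hdeg (len - 2) (by omega)
      rw [e] at h4
      omega
    · exact hnc h1
  have hcoret : ∀ i, 1 ≤ i → i < len → core_s4 k (g i) := by
    intro i h1 h2
    rcases eq_or_lt_of_le (show i + 1 ≤ len by omega) with he | hlt
    · have : i = len - 1 := by omega
      rwa [this]
    by_contra hnc
    have hA1 := hadj (i-1) (by omega)
    have e : i - 1 + 1 = i := by omega
    rw [e] at hA1
    have hA2 := hadj i (by omega)
    have hA1' : AA' k (g i) (g (i-1)) := by unfold AA' AA at hA1 ⊢; tauto
    have := nbr_unique' hnc hk hA1' hA2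
    have := hinj (i-1) (i+1) (by omega) (by omega) this
    omega
  -- count: tail is nodup and contained in [1, 3k)
  have htail : ∀ x ∈ L.tail, x ∈ Finset.Ico 1 (3*k) := by
    intro x hx
    rcases List.mem_iff_get.mp hx with ⟨i, hi⟩
    have hTlen : L.tail.length = len - 1 := by simp [hlen]
    have hgt : L.tail.get i = g (i.val + 1) := by
      rcases L with _ | ⟨a, t⟩
      · simp [hlen] at hsmall
      · show t.get i = (a :: t).getD (i.val+1) 0
        rw [List.getD_eq_getElem (a :: t) 0 (by
          have h5 := i.isLt
          simp only [List.tail_cons] at h5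
          simp only [List.length_cons]
          omega)]
        simp
        rfl
    have hcore := hcoret (i.val + 1) (by omega) (by have := i.isLt; omega)
    rw [← hgt, hi] at hcore
    simp [Finset.mem_Ico]
    unfold core_s4 at hcore
    omega
  have hnT : L.tail.Nodup := hn.sublist (List.tail_sublist L)
  have hcount : L.tail.length ≤ 3*k - 1 := by
    have h1 : L.tail.toFinset.card = L.tail.length := List.toFinset_card_of_nodup hnT
    have h2 : L.tail.toFinset ⊆ Finset.Ico 1 (3*k) := by
      intro x hx
      exact htail x (List.mem_toFinset.mp hx)
    have h3 := Finset.card_le_card h2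
    simp [Nat.card_Ico] at h3
    omega
  have : L.tail.length = len - 1 := by simp [hlen]
  omega

lemma deg_eq_of_iff {n : ℕ} (G : SimpleGraph (Fin n)) (x : Fin n)
    {inst : Fintype (G.neighborSet x)} (S : Finset ℕ)
    (h : ∀ y : Fin n, G.Adj x y ↔ y.val ∈ S) (hS : ∀ s ∈ S, s < n) :
    @SimpleGraph.degree _ G x inst = S.card := by
  show (G.neighborSet x).toFinset.card = S.card
  apply Finset.card_bij (fun (y : Fin n) _ => y.val)
  · intro a ha
    rw [Set.mem_toFinset, SimpleGraph.mem_neighborSet] at ha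
    exact (h a).mp ha
  · intro a _ b _ hab
    exact Fin.val_injective hab
  · intro s hs
    refine ⟨⟨s, hS s hs⟩, ?_, rfl⟩
    rw [Set.mem_toFinset, SimpleGraph.mem_neighborSet]
    exact (h ⟨s, hS s hs⟩).mpr hs

lemma adj_GG_iff {k : ℕ} (x y : Fin (7*k)) : (GG k).Adj x y ↔ AA k x.val y.val := Iff.rfl

lemma deg_GG {k : ℕ} (hk : 2 ≤ k) (x : Fin (7*k))
    {inst : Fintype ((GG k).neighborSet x)} :
    @SimpleGraph.degree _ (GG k) x inst = dd k x.val := by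
  have hx := x.isLt
  by_cases h1 : x.val = 0
  · rw [deg_eq_of_iff (GG k) x {1} ?_ ?_]
    · rw [Finset.card_singleton]
      unfold dd inS; split_ifs <;> omega
    · intro y
      rw [adj_GG_iff]
      simp only [Finset.mem_singleton]
      unfold AA QQ inS
      omega
    · intro s hs
      simp only [Finset.mem_singleton] at hs
      omega
  push_neg at h1
  by_cases h2 : x.val < 3*k
  · by_cases h3 : inS k x.val
    · rw [deg_eq_of_iff (GG k) x {x.val - 1, x.val + 1, 4*k + x.val} ?_ ?_]
      · rw [Finset.card_insert_of_notMem (by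
            simp only [Finset.mem_insert, Finset.mem_singleton]
            unfold inS at h3; omega),
          Finset.card_insert_of_notMem (by
            simp only [Finset.mem_singleton]
            unfold inS at h3; omega),
          Finset.card_singleton]
        unfold dd; rw [if_pos ⟨by omega, h2⟩, if_pos h3]
      · intro y
        rw [adj_GG_iff]
        simp only [Finset.mem_insert, Finset.mem_singleton]
        unfold inS at h3
        unfold AA QQ inS
        omega
      · intro s hs
        simp only [Finset.mem_insert, Finset.mem_singleton] at hs
        unfold inS at h3
        omega
    · rw [deg_eq_of_iff (GG k) x {x.val - 1, x.val + 1} ?_ ?_]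
      · rw [Finset.card_insert_of_notMem (by
            simp only [Finset.mem_singleton]; omega),
          Finset.card_singleton]
        unfold dd; rw [if_pos ⟨by omega, h2⟩, if_neg h3]
      · intro y
        rw [adj_GG_iff]
        simp only [Finset.mem_insert, Finset.mem_singleton]
        unfold inS at h3
        unfold AA QQ inS
        omega
      · intro s hs
        simp only [Finset.mem_insert, Finset.mem_singleton] at hs
        omega
  · by_cases h4 : x.val = 3*k
    · rw [deg_eq_of_iff (GG k) x {3*k - 1} ?_ ?_]
      · rw [Finset.card_singleton]
        unfold dd inS; split_ifs <;> omega
      · intro y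
        rw [adj_GG_iff]
        simp only [Finset.mem_singleton]
        unfold AA QQ inS
        omega
      · intro s hs
        simp only [Finset.mem_singleton] at hs
        omega
    · by_cases h5 : 4*k ≤ x.val ∧ inS k (x.val - 4*k)
      · rw [deg_eq_of_iff (GG k) x {x.val - 4*k} ?_ ?_]
        · rw [Finset.card_singleton]
          unfold dd
          rw [if_neg (by omega), if_pos (by right; right; exact h5)]
        · intro y
          rw [adj_GG_iff]
          simp only [Finset.mem_singleton]
          obtain ⟨h5a, h5b⟩ := h5
          unfold inS at h5b
          unfold AA QQ inS
          omega
        · intro s hs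
          simp only [Finset.mem_singleton] at hs
          omega
      · have h5' := h5
        unfold inS at h5'
        rw [deg_eq_of_iff (GG k) x (∅ : Finset ℕ) ?_ ?_]
        · rw [Finset.card_empty]
          unfold dd inS
          split_ifs <;> omega
        · intro y
          rw [adj_GG_iff]
          simp only [Finset.notMem_empty, iff_false]
          unfold AA QQ inS
          omega
        · intro s hs
          simp at hs

lemma adj_GG'_iff {k : ℕ} (hk : 2 ≤ k) (x y : Fin (7*k)) :
    (GG' k hk).Adj x y ↔ AA' k x.val y.val := Iff.rfl

lemma deg_GG' {k : ℕ} (hk : 2 ≤ k) (x : Fin (7*k))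
    {inst : Fintype ((GG' k hk).neighborSet x)} :
    @SimpleGraph.degree _ (GG' k hk) x inst = dd' k x.val := by
  have hx := x.isLt
  by_cases hu : x.val = k
  · rw [deg_eq_of_iff (GG' k hk) x {k - 1, k + 1, 2*k} ?_ ?_]
    · rw [Finset.card_insert_of_notMem (by
          simp only [Finset.mem_insert, Finset.mem_singleton]; omega),
        Finset.card_insert_of_notMem (by
          simp only [Finset.mem_singleton]; omega),
        Finset.card_singleton]
      unfold dd' dd
      split_ifs <;> simp only [inS] at * <;> omega
    · intro y
      rw [adj_GG'_iff]
      simp only [Finset.mem_insert, Finset.mem_singleton]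
      unfold AA' AA QQ inS
      omega
    · intro s hs
      simp only [Finset.mem_insert, Finset.mem_singleton] at hs
      omega
  · by_cases hv : x.val = 2*k
    · rw [deg_eq_of_iff (GG' k hk) x {2*k - 1, 2*k + 1, k} ?_ ?_]
      · rw [Finset.card_insert_of_notMem (by
            simp only [Finset.mem_insert, Finset.mem_singleton]; omega),
          Finset.card_insert_of_notMem (by
            simp only [Finset.mem_singleton]; omega),
          Finset.card_singleton]
        unfold dd' dd
        split_ifs <;> simp only [inS] at * <;> omega
      · intro y
        rw [adj_GG'_iff]
        simp only [Finset.mem_insert, Finset.mem_singleton]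
        unfold AA' AA QQ inS
        omega
      · intro s hs
        simp only [Finset.mem_insert, Finset.mem_singleton] at hs
        omega
    · -- away from u,v the degree is as in GG
      have hdd : dd' k x.val = dd k x.val := by
        unfold dd'; rw [if_neg (by omega)]
      rw [hdd]
      have hiff : ∀ y : Fin (7*k), (GG' k hk).Adj x y ↔ (GG k).Adj x y := by
        intro y
        rw [adj_GG'_iff, adj_GG_iff]
        unfold AA'
        constructor
        · rintro (h | h | h)
          · exact h
          · omega
          · omega
        · intro h; left; exact h
      -- transfer to deg_GG via the same finset
      have : @SimpleGraph.degree _ (GG' k hk) x inst =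
          ((GG k).neighborSet x).toFinset.card := by
        show ((GG' k hk).neighborSet x).toFinset.card = _
        classical
        congr 1
        ext y
        simp only [Set.mem_toFinset, SimpleGraph.mem_neighborSet]
        exact hiff y
      rw [this]
      exact deg_GG hk x

def spineWalk {k : ℕ} (hk : 2 ≤ k) : (m : ℕ) → (hm : m < 3*k) →
    (GG k).Walk ⟨0, by omega⟩ ⟨m, by omega⟩
  | 0, hm => SimpleGraph.Walk.nil
  | (m+1), hm => (spineWalk hk m (by omega)).concat
      (by show AA k m (m+1); left; left; exact ⟨rfl, by omega⟩)

lemma spineWalk_support {k : ℕ} (hk : 2 ≤ k) (m : ℕ) (hm : m < 3*k) :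
    (spineWalk hk m hm).support.map Fin.val = List.range (m+1) := by
  induction m with
  | zero => simp [spineWalk, List.range_succ]
  | succ m ih =>
    rw [spineWalk, SimpleGraph.Walk.support_concat,
      List.map_append, ih (by omega), List.range_succ]
    simp [List.range_succ]

def spineWalk' {k : ℕ} (hk : 2 ≤ k) : (m : ℕ) → (hm : m < 3*k) →
    (GG' k hk).Walk ⟨0, by omega⟩ ⟨m, by omega⟩
  | 0, hm => SimpleGraph.Walk.nil
  | (m+1), hm => (spineWalk' hk m (by omega)).concat
      (by show AA' k m (m+1); left; left; left; exact ⟨rfl, by omega⟩)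

lemma spineWalk'_support {k : ℕ} (hk : 2 ≤ k) (m : ℕ) (hm : m < 3*k) :
    (spineWalk' hk m hm).support.map Fin.val = List.range (m+1) := by
  induction m with
  | zero => simp [spineWalk', List.range_succ]
  | succ m ih =>
    rw [spineWalk', SimpleGraph.Walk.support_concat,
      List.map_append, ih (by omega), List.range_succ]
    simp [List.range_succ]

lemma dd_mono_prefix {k : ℕ} (hk : 2 ≤ k) : ∀ m, m < k - 1 → dd k m ≤ dd k (m+1) := by
  intro m hm; unfold dd; split_ifs <;> simp only [inS] at * <;> omega

lemma dd'_mono {k : ℕ} (hk : 2 ≤ k) : ∀ m, m < 3*k - 1 → dd' k m ≤ dd' k (m+1) := by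
  intro m hm; unfold dd' dd; split_ifs <;> simp only [inS] at * <;> omega

lemma mp_eq {V : Type*} [Fintype V] (G : SimpleGraph V) (D : V → ℕ)
    (hD : ∀ (x : V) (inst : Fintype (G.neighborSet x)),
      @SimpleGraph.degree _ G x inst = D x)
    (m : ℕ)
    (hub : ∀ (u v : V) (p : G.Walk u v), p.IsPath →
      (List.Chain' (· ≤ ·) (p.support.map D) ∨ List.Chain' (· ≥ ·) (p.support.map D)) →
      p.support.length ≤ m)
    (hex : ∃ (u v : V) (p : G.Walk u v), p.IsPath ∧
      List.Chain' (· ≤ ·) (p.support.map D) ∧ p.support.length = m) :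
    mp G = m := by
  unfold mp
  letI : DecidableEq V := Classical.decEq _
  letI : DecidableRel G.Adj := Classical.decRel _
  have hrw : ∀ (u v : V) (p : G.Walk u v),
      (p.support.map (fun x => G.degree x)) = p.support.map D := by
    intro u v p
    exact List.map_congr_left (fun x _ => hD x _)
  apply _root_.le_antisymm
  · apply csSup_le
    · obtain ⟨u, v, p, hp, hmono, hlen⟩ := hex
      exact ⟨m, u, v, p, hp, Or.inl (by rw [hrw]; exact hmono), hlen⟩
    · rintro n ⟨u, v, p, hp, hmono, hlen⟩
      rw [hrw] at hmono
      exact hlen ▸ hub u v p hp hmono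
  · apply le_csSup
    · refine ⟨m, ?_⟩
      rintro n ⟨u, v, p, hp, hmono, hlen⟩
      rw [hrw] at hmono
      exact hlen ▸ hub u v p hp hmono
    · obtain ⟨u, v, p, hp, hmono, hlen⟩ := hex
      exact ⟨u, v, p, hp, Or.inl (by rw [hrw]; exact hmono), hlen⟩

lemma mp_GG {k : ℕ} (hk : 2 ≤ k) : mp (GG k) = k := by
  apply mp_eq (GG k) (fun x => dd k x.val) (fun x inst => deg_GG hk x) k
  · intro u v p hp hmono
    set L := p.support.map Fin.val with hL
    have h7 : ∀ a ∈ L, a < 7*k := by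
      intro a ha
      rw [hL, List.mem_map] at ha
      obtain ⟨y, _, rfl⟩ := ha
      exact y.isLt
    have hcadj : L.Chain' (AA k) := by
      apply (List.isChain_map _).mpr
      exact p.isChain_adj_support
    have hnd : L.Nodup := hp.support_nodup.map Fin.val_injective
    have hLm : p.support.map (fun x => dd k x.val) = L.map (dd k) := by
      rw [hL, List.map_map]; rfl
    have hlength : p.support.length = L.length := (List.length_map _).symm
    rcases hmono with h | h
    · rw [hlength]
      exact asc_bound hk L h7 hcadj hnd (hLm ▸ h)
    · rw [hlength, ← List.length_reverse]
      apply asc_bound hk L.reverse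
        (fun a ha => h7 a (List.mem_reverse.mp ha))
        (List.isChain_reverse.mpr (hcadj.imp fun a b hab => AA_symm hab))
        (List.nodup_reverse.mpr hnd)
      rw [List.map_reverse]
      apply List.isChain_reverse.mpr
      have h' : List.Chain' (· ≥ ·) (L.map (dd k)) := hLm ▸ h
      exact h'
  · refine ⟨⟨0, by omega⟩, ⟨k-1, by omega⟩, spineWalk hk (k-1) (by omega), ?_, ?_, ?_⟩
    · rw [SimpleGraph.Walk.isPath_def]
      have h1 : ((spineWalk hk (k-1) (by omega)).support.map Fin.val).Nodup := by
        rw [spineWalk_support]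
        exact List.nodup_range
      exact h1.of_map
    · have h1 : (spineWalk hk (k-1) (by omega)).support.map (fun x => dd k x.val)
          = (List.range (k-1+1)).map (dd k) := by
        rw [← spineWalk_support hk (k-1) (by omega), List.map_map]; rfl
      rw [h1]
      apply (List.isChain_map _).mpr
      exact (List.isChain_range_succ _ _).mpr (dd_mono_prefix hk)
    · have h1 := congrArg List.length (spineWalk_support hk (k-1) (by omega))
      rw [List.length_map, List.length_range] at h1
      omega

lemma AA'_symm {k x y : ℕ} (h : AA' k x y) : AA' k y x := by
  unfold AA' AA at *; tauto

lemma mp_GG' {k : ℕ} (hk : 2 ≤ k) : mp (GG' k hk) = 3*k := by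
  apply mp_eq (GG' k hk) (fun x => dd' k x.val) (fun x inst => deg_GG' hk x) (3*k)
  · intro u v p hp hmono
    set L := p.support.map Fin.val with hL
    have h7 : ∀ a ∈ L, a < 7*k := by
      intro a ha
      rw [hL, List.mem_map] at ha
      obtain ⟨y, _, rfl⟩ := ha
      exact y.isLt
    have hcadj : L.Chain' (AA' k) := by
      apply (List.isChain_map _).mpr
      exact p.isChain_adj_support
    have hnd : L.Nodup := hp.support_nodup.map Fin.val_injective
    have hLm : p.support.map (fun x => dd' k x.val) = L.map (dd' k) := by
      rw [hL, List.map_map]; rfl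
    have hlength : p.support.length = L.length := (List.length_map _).symm
    rcases hmono with h | h
    · rw [hlength]
      exact asc_bound' hk L h7 hcadj hnd (hLm ▸ h)
    · rw [hlength, ← List.length_reverse]
      apply asc_bound' hk L.reverse
        (fun a ha => h7 a (List.mem_reverse.mp ha))
        (List.isChain_reverse.mpr (hcadj.imp fun a b hab => AA'_symm hab))
        (List.nodup_reverse.mpr hnd)
      rw [List.map_reverse]
      apply List.isChain_reverse.mpr
      have h' : List.Chain' (· ≥ ·) (L.map (dd' k)) := hLm ▸ h
      exact h'
  · refine ⟨⟨0, by omega⟩, ⟨3*k-1, by omega⟩, spineWalk' hk (3*k-1) (by omega), ?_, ?_, ?_⟩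
    · rw [SimpleGraph.Walk.isPath_def]
      have h1 : ((spineWalk' hk (3*k-1) (by omega)).support.map Fin.val).Nodup := by
        rw [spineWalk'_support]
        exact List.nodup_range
      exact h1.of_map
    · have h1 : (spineWalk' hk (3*k-1) (by omega)).support.map (fun x => dd' k x.val)
          = (List.range (3*k-1+1)).map (dd' k) := by
        rw [← spineWalk'_support hk (3*k-1) (by omega), List.map_map]; rfl
      rw [h1]
      apply (List.isChain_map _).mpr
      exact (List.isChain_range_succ _ _).mpr (dd'_mono hk)
    · have h1 := congrArg List.length (spineWalk'_support hk (3*k-1) (by omega))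
      rw [List.length_map, List.length_range] at h1
      omega

theorem mp_add_edge_sharp (k : ℕ) (hk : 2 ≤ k) :
    ∃ (n : ℕ) (G : SimpleGraph (Fin n)) (u v : Fin n),
      u ≠ v ∧ ¬ G.Adj u v ∧ mp G = k ∧
      mp (G ⊔ fromEdgeSet {s(u, v)}) = 3 * k := by
  have h7 : 0 < 7*k := by omega
  refine ⟨7*k, GG k, ⟨k, by omega⟩, ⟨2*k, by omega⟩, ?_, ?_, mp_GG hk, ?_⟩
  · intro h
    have := congrArg Fin.val h
    simp at this
    omega
  · intro h
    have h2 : AA k k (2*k) := h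
    unfold AA QQ inS at h2
    omega
  · have hE : (GG k ⊔ fromEdgeSet {s((⟨k, by omega⟩ : Fin (7*k)), (⟨2*k, by omega⟩ : Fin (7*k)))}) = GG' k hk := by
      ext x y
      simp only [SimpleGraph.sup_adj, SimpleGraph.fromEdgeSet_adj, Set.mem_singleton_iff,
        Sym2.eq_iff]
      rw [adj_GG_iff, adj_GG'_iff hk]
      unfold AA'
      constructor
      · rintro (h | ⟨⟨ha, hb⟩ | ⟨ha, hb⟩, hne⟩)
        · left; exact h
        · right; left
          exact ⟨by rw [ha], by rw [hb]⟩
        · right; right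
          exact ⟨by rw [ha], by rw [hb]⟩
      · rintro (h | ⟨ha, hb⟩ | ⟨ha, hb⟩)
        · left; exact h
        · right
          refine ⟨Or.inl ⟨Fin.ext ha, Fin.ext hb⟩, ?_⟩
          intro hxy
          have := congrArg Fin.val hxy
          omega
        · right
          refine ⟨Or.inr ⟨Fin.ext ha, Fin.ext hb⟩, ?_⟩
          intro hxy
          have := congrArg Fin.val hxy
          omega
    rw [hE]
    exact mp_GG' hk
end

section
/- Let G be a graph, e = (u,v) an edge of G, and G* the graph obtained from G by subdividing e with a new vertex w. Then mp(G*) ≤ mp(G) + 1. -/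
open SimpleGraph

/-- The graph obtained from `G` by subdividing the edge `uv` with a new vertex `none`. -/
def subdivide {V : Type*} (G : SimpleGraph V) (u v : V) : SimpleGraph (Option V) :=
  SimpleGraph.fromRel (fun a b =>
    (∃ x y, a = some x ∧ b = some y ∧ G.Adj x y ∧ ¬(x = u ∧ y = v) ∧ ¬(x = v ∧ y = u)) ∨
    (a = none ∧ (b = some u ∨ b = some v)))

section Aux

variable {V : Type*} {G : SimpleGraph V} {u v : V}

lemma subdivide_adj_some_iff {x y : V} :
    (subdivide G u v).Adj (some x) (some y) ↔
      G.Adj x y ∧ ¬(x = u ∧ y = v) ∧ ¬(x = v ∧ y = u) := by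
  rw [subdivide, fromRel_adj]
  constructor
  · rintro ⟨hne, h | h⟩
    · rcases h with ⟨a, b, ha, hb, h1, h2, h3⟩ | ⟨h, -⟩
      · simp only [Option.some.injEq] at ha hb; subst ha; subst hb; exact ⟨h1, h2, h3⟩
      · simp at h
    · rcases h with ⟨a, b, ha, hb, h1, h2, h3⟩ | ⟨h, -⟩
      · simp only [Option.some.injEq] at ha hb; subst ha; subst hb
        exact ⟨h1.symm, fun ⟨e1, e2⟩ => h3 ⟨e2, e1⟩, fun ⟨e1, e2⟩ => h2 ⟨e2, e1⟩⟩
      · simp at h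
  · rintro ⟨h1, h2, h3⟩
    exact ⟨by simpa using h1.ne, Or.inl (Or.inl ⟨x, y, rfl, rfl, h1, h2, h3⟩)⟩

lemma subdivide_adj_none_iff {c : Option V} :
    (subdivide G u v).Adj none c ↔ c = some u ∨ c = some v := by
  rw [subdivide, fromRel_adj]
  constructor
  · rintro ⟨hne, h | h⟩
    · rcases h with ⟨a, b, ha, -⟩ | ⟨-, h⟩
      · simp at ha
      · exact h
    · rcases h with ⟨a, b, -, hb, -⟩ | ⟨h, -⟩
      · simp at hb
      · exact absurd h.symm hne
  · rintro (rfl | rfl)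
    · exact ⟨by simp, Or.inl (Or.inr ⟨rfl, Or.inl rfl⟩)⟩
    · exact ⟨by simp, Or.inl (Or.inr ⟨rfl, Or.inr rfl⟩)⟩

lemma subdivide_adj_some {x y : V} (h : (subdivide G u v).Adj (some x) (some y)) :
    G.Adj x y :=
  (subdivide_adj_some_iff.mp h).1

lemma subdivide_pull {a b : Option V} (p : (subdivide G u v).Walk a b)
    (hn : none ∉ p.support) :
    ∃ (a' b' : V) (q : G.Walk a' b'), p.support = q.support.map some := by
  induction p with
  | nil =>
    rename_i a
    simp only [SimpleGraph.Walk.support_nil] at hn ⊢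
    obtain ⟨a', rfl⟩ : ∃ a', a = some a' :=
      Option.ne_none_iff_exists'.mp (by simpa using (Ne.symm (by simpa using hn)))
    exact ⟨a', a', Walk.nil, by simp⟩
  | cons h r ih =>
    rename_i x c bb
    simp only [SimpleGraph.Walk.support_cons, List.mem_cons] at hn
    push_neg at hn
    obtain ⟨hx, hr⟩ := hn
    obtain ⟨c', b', q, hq⟩ := ih hr
    obtain ⟨x', rfl⟩ : ∃ x', x = some x' := Option.ne_none_iff_exists'.mp (Ne.symm hx)
    have hc : c = some c' := by
      rw [r.support_eq_cons, q.support_eq_cons] at hq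
      simpa using List.head_eq_of_cons_eq hq
    subst hc
    exact ⟨x', b', Walk.cons (subdivide_adj_some h) q, by simp [hq]⟩

lemma subdivide_degree [Fintype V] (he : G.Adj u v) (x : V)
    [DecidableRel G.Adj] [DecidableRel (subdivide G u v).Adj] :
    (subdivide G u v).degree (some x) = G.degree x := by
  classical
  have hne := he.ne
  have himg : (subdivide G u v).neighborFinset (some x) =
      (G.neighborFinset x).image
        (fun y => if (x = u ∧ y = v) ∨ (x = v ∧ y = u) then none else some y) := by
    ext c
    simp only [mem_neighborFinset, Finset.mem_image]
    constructor
    · intro hc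
      match c with
      | none =>
        have hx : x = u ∨ x = v := by
          have := subdivide_adj_none_iff.mp hc.symm
          simpa using this
        rcases hx with rfl | rfl
        · exact ⟨v, he, by simp⟩
        · exact ⟨u, he.symm, by simp⟩
      | some y =>
        have h := subdivide_adj_some_iff.mp hc
        exact ⟨y, h.1, by simp [h.2.1, h.2.2]⟩
    · rintro ⟨y, hy, rfl⟩
      by_cases hcond : (x = u ∧ y = v) ∨ (x = v ∧ y = u)
      · rw [if_pos hcond]
        refine (subdivide_adj_none_iff.mpr ?_).symm
        rcases hcond with ⟨rfl, -⟩ | ⟨rfl, -⟩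
        · exact Or.inl rfl
        · exact Or.inr rfl
      · rw [if_neg hcond]
        exact subdivide_adj_some_iff.mpr
          ⟨hy, fun h => hcond (Or.inl h), fun h => hcond (Or.inr h)⟩
  show ((subdivide G u v).neighborFinset (some x)).card = (G.neighborFinset x).card
  rw [himg, Finset.card_image_of_injOn]
  intro y1 h1 y2 h2 hgy
  by_cases c1 : (x = u ∧ y1 = v) ∨ (x = v ∧ y1 = u) <;>
    by_cases c2 : (x = u ∧ y2 = v) ∨ (x = v ∧ y2 = u) <;>
    simp only [if_pos, if_neg, c1, c2] at hgy <;> simp_all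
  rcases c1 with ⟨rfl, rfl⟩ | ⟨rfl, rfl⟩ <;> rcases c2 with ⟨h, rfl⟩ | ⟨h, rfl⟩ <;> simp_all

lemma subdivide_remove_aux (he : G.Adj u v) {a b : Option V}
    (p : (subdivide G u v).Walk a b) (hp : p.IsPath) (hnone : none ∈ p.support)
    (hb : b ≠ none) :
    ∃ (a' b' : V) (q : G.Walk a' b'), q.support.Nodup ∧
      (q.support.map some).Sublist p.support ∧
      q.support.length + 1 = p.support.length := by
  classical
  by_cases ha : a = none
  · subst ha
    obtain ⟨c, h, r, rfl⟩ := Walk.exists_eq_cons_of_ne (Ne.symm hb) p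
    have hnd := hp.support_nodup
    rw [Walk.support_cons] at hnd
    obtain ⟨hnr, hrnd⟩ := List.nodup_cons.mp hnd
    obtain ⟨a', b', q, hq⟩ := subdivide_pull r hnr
    refine ⟨a', b', q, List.Nodup.of_map some (hq ▸ hrnd), ?_, ?_⟩
    · rw [Walk.support_cons, ← hq]
      exact List.sublist_cons_self _ _
    · rw [Walk.support_cons, List.length_cons]
      have := congrArg List.length hq
      simpa using this.symm
  · -- internal case
    have hsplit := p.take_spec hnone
    have hp1 : (p.takeUntil none hnone).IsPath := hp.takeUntil hnone
    have hp2 : (p.dropUntil none hnone).IsPath := hp.dropUntil hnone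
    obtain ⟨c2, h2, r2, hq2e⟩ :=
      Walk.exists_eq_cons_of_ne (Ne.symm hb) (p.dropUntil none hnone)
    obtain ⟨c1, h1, r1, hq1e⟩ :=
      Walk.exists_eq_cons_of_ne (Ne.symm ha) (p.takeUntil none hnone).reverse
    have hs1 : (p.takeUntil none hnone).support = r1.support.reverse ++ [none] := by
      have h1' : (p.takeUntil none hnone).support.reverse = none :: r1.support := by
        rw [← Walk.support_reverse, hq1e, Walk.support_cons]
      rw [← List.reverse_reverse (p.takeUntil none hnone).support, h1']
      simp
    have hpsup : p.support = r1.support.reverse ++ none :: r2.support := by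
      conv_lhs => rw [← hsplit]
      rw [Walk.support_append, hs1, hq2e, Walk.support_cons, List.tail_cons]
      simp
    have hnr1 : none ∉ r1.support := by
      have hnd1 := hp1.reverse.support_nodup
      rw [hq1e, Walk.support_cons] at hnd1
      exact (List.nodup_cons.mp hnd1).1
    have hnr2 : none ∉ r2.support := by
      have hnd2 := hp2.support_nodup
      rw [hq2e, Walk.support_cons] at hnd2
      exact (List.nodup_cons.mp hnd2).1
    obtain ⟨c1x, a', qa, hqa⟩ := subdivide_pull r1 hnr1
    obtain ⟨c2x, b', qb, hqb⟩ := subdivide_pull r2 hnr2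
    have hc1 : c1 = some c1x := by
      rw [r1.support_eq_cons, qa.support_eq_cons] at hqa
      simpa using List.head_eq_of_cons_eq hqa
    have hc2 : c2 = some c2x := by
      rw [r2.support_eq_cons, qb.support_eq_cons] at hqb
      simpa using List.head_eq_of_cons_eq hqb
    have hnd := hp.support_nodup
    rw [hpsup] at hnd
    have hdisj := List.disjoint_of_nodup_append hnd
    have hne12 : c1 ≠ c2 := by
      intro h
      apply hdisj (List.mem_reverse.mpr r1.start_mem_support)
      rw [h]
      exact List.mem_cons_of_mem _ r2.start_mem_support
    have hadj : G.Adj c1x c2x := by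
      rcases subdivide_adj_none_iff.mp h1 with hx1 | hx1 <;>
        rcases subdivide_adj_none_iff.mp h2 with hx2 | hx2 <;>
        rw [hc1] at hx1 <;> rw [hc2] at hx2 <;>
        simp only [Option.some.injEq] at hx1 hx2 <;> subst hx1 <;> subst hx2
      · exact absurd (hc1.trans hc2.symm) hne12
      · exact he
      · exact he.symm
      · exact absurd (hc1.trans hc2.symm) hne12
    refine ⟨a', b', qa.reverse.append (Walk.cons hadj qb), ?_, ?_, ?_⟩ <;>
      [skip; skip; skip]
    all_goals
      have hqsup : (qa.reverse.append (Walk.cons hadj qb)).support =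
          qa.support.reverse ++ qb.support := by
        rw [Walk.support_append, Walk.support_reverse, Walk.support_cons, List.tail_cons]
      have hmap : ((qa.reverse.append (Walk.cons hadj qb)).support.map some) =
          r1.support.reverse ++ r2.support := by
        rw [hqsup, List.map_append, List.map_reverse, ← hqa, ← hqb]
      have hsub : ((qa.reverse.append (Walk.cons hadj qb)).support.map some).Sublist
          p.support := by
        rw [hmap, hpsup]
        exact List.Sublist.append_left (List.sublist_cons_self _ _) _
    · exact List.Nodup.of_map some (List.Nodup.sublist hsub hp.support_nodup)
    · exact hsub
    · have l1 := congrArg List.length hmap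
      have l2 := congrArg List.length hpsup
      simp only [List.length_map, List.length_append, List.length_reverse,
        List.length_cons] at l1 l2
      omega

lemma subdivide_remove (he : G.Adj u v) {a b : Option V}
    (p : (subdivide G u v).Walk a b) (hp : p.IsPath) (hnone : none ∈ p.support)
    (hab : a ≠ none ∨ b ≠ none) :
    ∃ (a' b' : V) (q : G.Walk a' b'), q.support.Nodup ∧
      (q.support.map some).Sublist p.support ∧
      q.support.length + 1 = p.support.length := by
  rcases ne_or_eq b none with hb | rfl
  · exact subdivide_remove_aux he p hp hnone hb
  · have ha : a ≠ none := by
      rcases hab with ha | hb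
      · exact ha
      · exact absurd rfl hb
    obtain ⟨a', b', q, hnd, hsub, hlen⟩ := subdivide_remove_aux he p.reverse hp.reverse
      (by rwa [Walk.support_reverse, List.mem_reverse]) ha
    refine ⟨b', a', q.reverse, by simpa using hnd, ?_, by simpa using hlen⟩
    have h2 := hsub.reverse
    rw [Walk.support_reverse, List.reverse_reverse] at h2
    simpa [Walk.support_reverse, List.map_reverse] using h2

lemma mp_le {W : Type*} [Fintype W] (H : SimpleGraph W) (m : ℕ)
    (h : ∀ (a b : W) (q : H.Walk a b), q.IsPath →
      (letI : DecidableRel H.Adj := Classical.decRel _;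
        (List.Chain' (· ≤ ·) (q.support.map fun x => H.degree x) ∨
         List.Chain' (· ≥ ·) (q.support.map fun x => H.degree x))) →
      q.support.length ≤ m) : mp H ≤ m := by
  refine csSup_le' ?_
  rintro n ⟨a, b, q, hq, hc, rfl⟩
  exact h a b q hq hc

lemma le_mp_s6 {W : Type*} [Fintype W] (H : SimpleGraph W) {a b : W}
    (q : H.Walk a b) (hq : q.IsPath)
    (hc : letI : DecidableRel H.Adj := Classical.decRel _;
      (List.Chain' (· ≤ ·) (q.support.map fun x => H.degree x) ∨
       List.Chain' (· ≥ ·) (q.support.map fun x => H.degree x))) :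
    q.support.length ≤ mp H := by
  have hbdd : BddAbove {n : ℕ | ∃ (a b : W) (p : H.Walk a b), p.IsPath ∧
      (letI : DecidableRel H.Adj := Classical.decRel _;
        (List.Chain' (· ≤ ·) (p.support.map fun x => H.degree x) ∨
         List.Chain' (· ≥ ·) (p.support.map fun x => H.degree x))) ∧
      p.support.length = n} := by
    refine ⟨Fintype.card W, ?_⟩
    rintro n ⟨x, y, p, hp, -, rfl⟩
    have := hp.length_lt
    rw [Walk.length_support]
    omega
  exact le_csSup hbdd ⟨a, b, q, hq, hc, rfl⟩

end Aux

theorem mp_subdivide_le {V : Type*} [Fintype V] (G : SimpleGraph V) (u v : V)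
    (he : G.Adj u v) :
    mp (subdivide G u v) ≤ mp G + 1 := by
  letI : DecidableEq (Option V) := Classical.decEq _
  letI : DecidableRel G.Adj := Classical.decRel _;
  letI : DecidableRel (subdivide G u v).Adj := Classical.decRel _;
  haveI : IsTrans ℕ (· ≥ ·) := ⟨fun a b c h1 h2 => le_trans h2 h1⟩
  refine mp_le _ _ ?_
  intro a b p hp hchain
  by_cases hnone : (none : Option V) ∈ p.support
  · by_cases hab : a = none ∧ b = none
    · obtain ⟨rfl, rfl⟩ := hab
      have hnil : p = Walk.nil := (Walk.isPath_iff_eq_nil (p := p)).mp hp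
      subst hnil
      simp only [Walk.support_nil, List.length_singleton]
      omega
    · have hab' : a ≠ none ∨ b ≠ none := by tauto
      obtain ⟨a', b', q, hnd, hsub, hlen⟩ := subdivide_remove he p hp hnone hab'
      have hq : q.IsPath := (Walk.isPath_def q).mpr hnd
      have key : (q.support.map some).map (fun x => (subdivide G u v).degree x) =
          q.support.map (fun x => G.degree x) := by
        rw [List.map_map]
        exact List.map_congr_left (fun x _ => subdivide_degree he x)
      have hsubm := hsub.map (fun x => (subdivide G u v).degree x)
      have hchain' : List.Chain' (· ≤ ·) (q.support.map fun x => G.degree x) ∨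
          List.Chain' (· ≥ ·) (q.support.map fun x => G.degree x) := by
        rcases hchain with h | h
        · left; rw [← key]; exact h.sublist hsubm
        · right; rw [← key]; exact h.sublist hsubm
      have := le_mp_s6 G q hq hchain'
      omega
  · obtain ⟨a', b', q, hq⟩ := subdivide_pull p hnone
    have hqp : q.IsPath := (Walk.isPath_def q).mpr
      (List.Nodup.of_map some (hq ▸ hp.support_nodup))
    have key : (q.support.map some).map (fun x => (subdivide G u v).degree x) =
        q.support.map (fun x => G.degree x) := by
      rw [List.map_map]
      exact List.map_congr_left (fun x _ => subdivide_degree he x)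
    have hchain' : List.Chain' (· ≤ ·) (q.support.map fun x => G.degree x) ∨
        List.Chain' (· ≥ ·) (q.support.map fun x => G.degree x) := by
      rcases hchain with h | h
      · left; rw [← key, ← hq]; exact h
      · right; rw [← key, ← hq]; exact h
    have := le_mp_s6 G q hqp hchain'
    have hlen : p.support.length = q.support.length := by rw [hq]; simp
    omega
end

section
/- Let G be a triangle-free graph and e = uv an edge of G, and let G·e be the graph obtained by contracting e to a new vertex w. Then mp(G·e) ≤ 2·mp(G). -/
open SimpleGraph

/-- The graph obtained from `G` by contracting the edge `uv`: the vertex `u` plays the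
role of the merged vertex `w`, and `v` is removed. -/
def contractEdge {V : Type*} (G : SimpleGraph V) (u v : V) : SimpleGraph {x : V // x ≠ v} :=
  SimpleGraph.fromRel (fun a b =>
    G.Adj a.1 b.1 ∨ (a.1 = u ∧ G.Adj v b.1) ∨ (b.1 = u ∧ G.Adj a.1 v))

namespace MPAux

variable {V : Type*} {G : SimpleGraph V} {u v : V}

lemma no_tri (htf : G.CliqueFree 3) {a b c : V} (hab : G.Adj a b) (hac : G.Adj a c)
    (hbc : G.Adj b c) : False := by
  classical
  exact htf {a, b, c} (SimpleGraph.is3Clique_triple_iff.mpr ⟨hab, hac, hbc⟩)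

lemma deg_one [Fintype V] {x y z : V} [Fintype (G.neighborSet x)] (h1 : G.degree x = 1)
    (ha : G.Adj x y) (hb : G.Adj x z) : y = z := by
  rw [← SimpleGraph.card_neighborFinset_eq_degree, Finset.card_eq_one] at h1
  obtain ⟨a, haa⟩ := h1
  have h1 : y ∈ G.neighborFinset x := (SimpleGraph.mem_neighborFinset _ _ _).mpr ha
  have h2 : z ∈ G.neighborFinset x := (SimpleGraph.mem_neighborFinset _ _ _).mpr hb
  rw [haa, Finset.mem_singleton] at h1 h2
  rw [h1, h2]

lemma cAdj {a b : {x : V // x ≠ v}} :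
    (contractEdge G u v).Adj a b ↔ a ≠ b ∧
      (G.Adj a.1 b.1 ∨ (a.1 = u ∧ G.Adj v b.1) ∨ (b.1 = u ∧ G.Adj v a.1)) := by
  unfold contractEdge
  rw [SimpleGraph.fromRel_adj]
  have hs : ∀ x y : V, G.Adj x y → G.Adj y x := fun x y h => h.symm
  constructor
  · rintro ⟨h, h' | h'⟩ <;> exact ⟨h, by tauto⟩
  · rintro ⟨h, h'⟩
    exact ⟨h, by tauto⟩

lemma adj_transfer {a b : {x : V // x ≠ v}} (ha : a.1 ≠ u) (hb : b.1 ≠ u)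
    (h : (contractEdge G u v).Adj a b) : G.Adj a.1 b.1 := by
  rcases cAdj.mp h with ⟨-, h | ⟨h1, -⟩ | ⟨h1, -⟩⟩ <;> tauto

lemma adj_w_iff (hne : u ≠ v) {b : {x : V // x ≠ v}} :
    (contractEdge G u v).Adj ⟨u, hne⟩ b ↔ b.1 ≠ u ∧ (G.Adj u b.1 ∨ G.Adj v b.1) := by
  rw [cAdj]
  constructor
  · rintro ⟨hab, h | ⟨-, h⟩ | ⟨h1, h2⟩⟩
    · exact ⟨fun hb => hab (Subtype.ext hb.symm), Or.inl h⟩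
    · exact ⟨fun hb => hab (Subtype.ext hb.symm), Or.inr h⟩
    · exact (hab (Subtype.ext h1.symm)).elim
  · rintro ⟨hbu, h | h⟩
    · exact ⟨fun hh => hbu (congrArg Subtype.val hh).symm, Or.inl h⟩
    · exact ⟨fun hh => hbu (congrArg Subtype.val hh).symm, Or.inr (Or.inl ⟨rfl, h⟩)⟩

lemma deg_pres [DecidableEq V] (htf : G.CliqueFree 3) (huv : G.Adj u v) {x : {x : V // x ≠ v}}
    (hx : x.1 ≠ u)
    [iC : Fintype ((contractEdge G u v).neighborSet x)] [iG : Fintype (G.neighborSet x.1)] :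
    (contractEdge G u v).degree x = G.degree x.1 := by
  classical
  rw [degree, degree]
  refine Finset.card_bij'
    (fun y _ => if y.1 = u then (if G.Adj x.1 v then v else u) else y.1)
    (fun z hz => if hz2 : z = v then ⟨u, huv.ne⟩ else ⟨z, hz2⟩) ?_ ?_ ?_ ?_
  · intro y hy
    rw [mem_neighborFinset] at hy ⊢
    by_cases hyu : y.1 = u
    · have hy' : G.Adj x.1 u ∨ G.Adj x.1 v := by
        rcases cAdj.mp hy with ⟨hne, h | ⟨h1, -⟩ | ⟨h1, h2⟩⟩
        · exact Or.inl (hyu ▸ h)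
        · exact absurd h1 hx
        · exact Or.inr h2.symm
      simp only [hyu, if_pos]
      by_cases hxv : G.Adj x.1 v
      · simp [hxv]
      · simp only [hxv, if_neg, if_false]
        tauto
    · simp only [hyu, if_neg, if_false]
      exact adj_transfer hx hyu hy
  · intro z hz
    rw [mem_neighborFinset] at hz ⊢
    by_cases hz2 : z = v
    · subst hz2
      simp only [dif_pos]
      rw [cAdj]
      refine ⟨fun hh => hx (congrArg Subtype.val hh), Or.inr (Or.inr ⟨rfl, hz.symm⟩)⟩
    · simp only [hz2, dif_neg]
      rw [cAdj]
      exact ⟨fun hh => G.irrefl (hh ▸ hz), Or.inl hz⟩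
  · intro y hy
    rw [mem_neighborFinset] at hy
    by_cases hyu : y.1 = u
    · by_cases hxv : G.Adj x.1 v
      · simp only [hyu, if_pos, hxv, if_pos, dif_pos]
        exact Subtype.ext hyu.symm
      · simp only [hyu, if_pos, hxv, if_neg, if_false]
        rw [dif_neg huv.ne]
        exact Subtype.ext hyu.symm
    · simp only [hyu, if_neg, if_false]
      rw [dif_neg y.2]
  · intro z hz
    rw [mem_neighborFinset] at hz
    by_cases hz2 : z = v
    · subst hz2
      simp [hz]
    · simp only [hz2, dif_neg]
      by_cases hzu : z = u
      · subst hzu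
        have hxv : ¬ G.Adj x.1 v := fun h => no_tri htf hz h huv
        simp [hxv]
      · simp [hzu]

lemma deg_w [DecidableEq V] [Fintype V] (htf : G.CliqueFree 3) (huv : G.Adj u v)
    [iC : Fintype ((contractEdge G u v).neighborSet ⟨u, huv.ne⟩)]
    [i1 : Fintype (G.neighborSet u)] [i2 : Fintype (G.neighborSet v)] :
    (contractEdge G u v).degree ⟨u, huv.ne⟩ + 2 = G.degree u + G.degree v := by
  classical
  have hdisj : Disjoint (G.neighborFinset u) (G.neighborFinset v) := by
    rw [Finset.disjoint_left]
    intro z hz1 hz2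
    rw [mem_neighborFinset] at hz1 hz2
    exact no_tri htf huv hz1 hz2
  have hveq : (((G.neighborFinset u ∪ G.neighborFinset v).erase u).erase v).card
      = G.degree u + G.degree v - 2 := by
    have hu : u ∈ G.neighborFinset u ∪ G.neighborFinset v := by
      simp [mem_neighborFinset, huv.symm]
    have hv : v ∈ (G.neighborFinset u ∪ G.neighborFinset v).erase u := by
      refine Finset.mem_erase.mpr ⟨huv.ne', ?_⟩
      simp [mem_neighborFinset, huv]
    rw [Finset.card_erase_of_mem hv, Finset.card_erase_of_mem hu,
      Finset.card_union_of_disjoint hdisj]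
    rfl
  have hdu : 1 ≤ G.degree u := by
    rw [← card_neighborFinset_eq_degree]
    exact Finset.card_pos.mpr ⟨v, (mem_neighborFinset _ _ _).mpr huv⟩
  have hdv : 1 ≤ G.degree v := by
    rw [← card_neighborFinset_eq_degree]
    exact Finset.card_pos.mpr ⟨u, (mem_neighborFinset _ _ _).mpr huv.symm⟩
  have hcard : (contractEdge G u v).degree ⟨u, huv.ne⟩
      = (((G.neighborFinset u ∪ G.neighborFinset v).erase u).erase v).card := by
    rw [degree]
    refine Finset.card_bij' (fun y _ => y.1) (fun z hz => ⟨z, (Finset.mem_erase.mp hz).1⟩)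
      ?_ ?_ ?_ ?_
    · intro y hy
      rw [mem_neighborFinset] at hy
      obtain ⟨hyu, hadj⟩ := (adj_w_iff huv.ne).mp hy
      refine Finset.mem_erase.mpr ⟨y.2, Finset.mem_erase.mpr ⟨hyu, ?_⟩⟩
      simp only [Finset.mem_union, mem_neighborFinset]
      exact hadj
    · intro z hz
      rw [mem_neighborFinset]
      obtain ⟨hz1, hz2⟩ := Finset.mem_erase.mp hz
      obtain ⟨hz3, hz4⟩ := Finset.mem_erase.mp hz2
      rw [adj_w_iff huv.ne]
      simp only [Finset.mem_union, mem_neighborFinset] at hz4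
      exact ⟨hz3, hz4⟩
    · intro y _; rfl
    · intro z _; rfl
  omega

lemma transfer {a b : {x : V // x ≠ v}} (p : (contractEdge G u v).Walk a b)
    (h : ∀ x ∈ p.support, x.1 ≠ u) :
    ∃ q : G.Walk a.1 b.1, q.support = p.support.map Subtype.val := by
  induction p with
  | nil => exact ⟨Walk.nil, by simp⟩
  | @cons a c b hadj p ih =>
    obtain ⟨q, hq⟩ := ih (fun x hx => h x (by rw [Walk.support_cons]; exact List.mem_cons_of_mem _ hx))
    have ha : a.1 ≠ u := h a (by rw [Walk.support_cons]; exact List.mem_cons_self)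
    have hc : c.1 ≠ u := h c (by rw [Walk.support_cons]; exact List.mem_cons_of_mem _ p.start_mem_support)
    exact ⟨Walk.cons (adj_transfer ha hc hadj) q, by rw [Walk.support_cons, Walk.support_cons, List.map_cons, hq]⟩

variable [Fintype V]

lemma le_mp_of_path [inst : DecidableRel G.Adj] {a b : V} (q : G.Walk a b) (hq : q.IsPath)
    (hch : (q.support.map (fun x => G.degree x)).Chain' (· ≤ ·) ∨
           (q.support.map (fun x => G.degree x)).Chain' (· ≥ ·)) :
    q.support.length ≤ mp G := by
  unfold mp
  refine le_csSup ⟨Fintype.card V, ?_⟩ ⟨a, b, q, hq, ?_, rfl⟩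
  · rintro n ⟨x, y, p, hp, -, rfl⟩
    exact (Walk.isPath_def p |>.mp hp).length_le_card
  · convert hch using 4 <;> congr!

lemma one_le_mp (x : V) : 1 ≤ mp G := by
  classical
  have := le_mp_of_path (G := G) (Walk.nil : G.Walk x x) Walk.IsPath.nil
    (Or.inl (List.isChain_singleton _))
  simpa using this

variable [DecidableEq V]

lemma half_basic [DecidableRel G.Adj] {R : ℕ → ℕ → Prop}
    (hsel : ∀ l : List ℕ, l.Chain' R → l.Chain' (· ≤ ·) ∨ l.Chain' (· ≥ ·))
    (htf : G.CliqueFree 3) (huv : G.Adj u v) {c : {x : V // x ≠ v}}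
    [DecidableRel (contractEdge G u v).Adj]
    (r : (contractEdge G u v).Walk ⟨u, huv.ne⟩ c) (hr : r.IsPath)
    (hch : (r.support.map (fun x => (contractEdge G u v).degree x)).Chain' R) :
    r.support.length ≤ mp G + 1 := by
  by_cases hn : r.Nil
  · rw [Walk.length_support, Walk.nil_iff_length_eq.mp hn]
    omega
  · obtain ⟨y, hadj, r', rfl⟩ := Walk.not_nil_iff.mp hn
    have hr' := hr.of_cons
    have hwns : (⟨u, huv.ne⟩ : {x : V // x ≠ v}) ∉ r'.support :=
      ((Walk.cons_isPath_iff hadj r').mp hr).2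
    have hne : ∀ x ∈ r'.support, x.1 ≠ u := fun x hx hxu =>
      hwns (by
        rw [show (⟨u, huv.ne⟩ : {x : V // x ≠ v}) = x from Subtype.ext hxu.symm]
        exact hx)
    obtain ⟨q, hq⟩ := transfer r' hne
    have hqp : q.IsPath := by
      rw [Walk.isPath_def, hq]
      exact ((Walk.isPath_def r').mp hr').map Subtype.val_injective
    have hchain : (q.support.map (fun x => G.degree x)).Chain' R := by
      rw [hq, List.map_map]
      have heq : r'.support.map ((fun x => G.degree x) ∘ Subtype.val)
          = r'.support.map (fun x => (contractEdge G u v).degree x) :=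
        List.map_congr_left (fun x hx => (deg_pres htf huv (hne x hx)).symm)
      rw [heq]
      have := hch.tail
      rwa [Walk.support_cons, List.map_cons, List.tail_cons] at this
    have hfin := le_mp_of_path q hqp (hsel _ hchain)
    have hlq : q.support.length = r'.support.length := by rw [hq, List.length_map]
    rw [Walk.support_cons, List.length_cons]
    omega

lemma half_ext [DecidableRel G.Adj] {R : ℕ → ℕ → Prop}
    (hsel : ∀ l : List ℕ, l.Chain' R → l.Chain' (· ≤ ·) ∨ l.Chain' (· ≥ ·))
    (htf : G.CliqueFree 3) (huv : G.Adj u v) {y c : {x : V // x ≠ v}}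
    [DecidableRel (contractEdge G u v).Adj]
    (hadj : (contractEdge G u v).Adj ⟨u, huv.ne⟩ y) (r' : (contractEdge G u v).Walk y c)
    (hp : (Walk.cons hadj r').IsPath)
    (hch : (r'.support.map (fun x => (contractEdge G u v).degree x)).Chain' R)
    (z : V) (hz : G.Adj z y.1) (hzuv : z = u ∨ z = v)
    (hzy : R (G.degree z) (G.degree y.1)) :
    r'.support.length + 1 ≤ mp G := by
  have hwns : (⟨u, huv.ne⟩ : {x : V // x ≠ v}) ∉ r'.support :=
    ((Walk.cons_isPath_iff hadj r').mp hp).2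
  have hne : ∀ x ∈ r'.support, x.1 ≠ u := fun x hx hxu =>
    hwns (by
        rw [show (⟨u, huv.ne⟩ : {x : V // x ≠ v}) = x from Subtype.ext hxu.symm]
        exact hx)
  obtain ⟨q, hq⟩ := transfer r' hne
  have hzq : z ∉ q.support := by
    rw [hq]
    intro hmem
    obtain ⟨x, hx, hxz⟩ := List.mem_map.mp hmem
    rcases hzuv with rfl | rfl
    · exact hne x hx hxz
    · exact x.2 hxz
  have hqp : q.IsPath := by
    rw [Walk.isPath_def, hq]
    exact ((Walk.isPath_def r').mp hp.of_cons).map Subtype.val_injective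
  have hQp : (Walk.cons hz q).IsPath := (Walk.cons_isPath_iff hz q).mpr ⟨hqp, hzq⟩
  have hchain : ((Walk.cons hz q).support.map (fun x => G.degree x)).Chain' R := by
    rw [Walk.support_cons, List.map_cons]
    refine List.isChain_cons.mpr ⟨?_, ?_⟩
    · intro d hd
      rw [hq, List.map_map, Walk.support_eq_cons r', List.map_cons, List.head?_cons] at hd
      rw [Option.mem_some_iff] at hd
      rw [← hd]
      exact hzy
    · rw [hq, List.map_map]
      have heq : r'.support.map ((fun x => G.degree x) ∘ Subtype.val)
          = r'.support.map (fun x => (contractEdge G u v).degree x) :=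
        List.map_congr_left (fun x hx => (deg_pres htf huv (hne x hx)).symm)
      rw [heq]
      exact hch
  have hfin := le_mp_of_path (Walk.cons hz q) hQp (hsel _ hchain)
  rw [Walk.support_cons, List.length_cons, hq, List.length_map] at hfin
  omega

lemma key_le [DecidableRel G.Adj] [DecidableRel (contractEdge G u v).Adj]
    (htf : G.CliqueFree 3) (huv : G.Adj u v) {a b : {x : V // x ≠ v}}
    (p : (contractEdge G u v).Walk a b) (hp : p.IsPath)
    (hch : (p.support.map (fun x => (contractEdge G u v).degree x)).Chain' (· ≤ ·)) :
    p.support.length ≤ 2 * mp G := by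
  have h1mp : 1 ≤ mp G := one_le_mp u
  by_cases hws : (⟨u, huv.ne⟩ : {x : V // x ≠ v}) ∈ p.support
  case neg =>
    have hne : ∀ x ∈ p.support, x.1 ≠ u := fun x hx hxu =>
      hws (by
        rw [show (⟨u, huv.ne⟩ : {x : V // x ≠ v}) = x from Subtype.ext hxu.symm]
        exact hx)
    obtain ⟨q, hq⟩ := transfer p hne
    have hqp : q.IsPath := by
      rw [Walk.isPath_def, hq]
      exact ((Walk.isPath_def p).mp hp).map Subtype.val_injective
    have hchain : (q.support.map (fun x => G.degree x)).Chain' (· ≤ ·) := by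
      rw [hq, List.map_map]
      have heq : p.support.map ((fun x => G.degree x) ∘ Subtype.val)
          = p.support.map (fun x => (contractEdge G u v).degree x) :=
        List.map_congr_left (fun x hx => (deg_pres htf huv (hne x hx)).symm)
      rw [heq]
      exact hch
    have hfin := le_mp_of_path q hqp (Or.inl hchain)
    rw [hq, List.length_map] at hfin
    omega
  case pos =>
    have hp1 : (p.takeUntil _ hws).IsPath := hp.takeUntil hws
    have hp2 : (p.dropUntil _ hws).IsPath := hp.dropUntil hws
    set q1 := p.takeUntil _ hws with hq1d
    set q2 := p.dropUntil _ hws with hq2d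
    have hsup : p.support = q1.support ++ q2.support.tail := by
      rw [← p.take_spec hws, Walk.support_append]
    have hch' : ((q1.support.map (fun x => (contractEdge G u v).degree x))
        ++ (q2.support.tail.map (fun x => (contractEdge G u v).degree x))).Chain' (· ≤ ·) := by
      rw [← List.map_append, ← hsup]
      exact hch
    obtain ⟨hc1, hc2, hjun⟩ := List.isChain_append.mp hch'
    have hlast : q1.support.getLast? = some (⟨u, huv.ne⟩ : {x : V // x ≠ v}) := by
      have h1 : q1.support = q1.reverse.support.reverse := by
        rw [Walk.support_reverse, List.reverse_reverse]
      rw [h1, List.getLast?_reverse, Walk.support_eq_cons]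
      rfl
    have hlastm : (q1.support.map (fun x => (contractEdge G u v).degree x)).getLast?
        = some ((contractEdge G u v).degree ⟨u, huv.ne⟩) := by
      rw [List.getLast?_map, hlast]
      rfl
    have hjw : ∀ yd ∈ (q2.support.tail.map (fun x => (contractEdge G u v).degree x)).head?,
        (contractEdge G u v).degree ⟨u, huv.ne⟩ ≤ yd := by
      intro yd hyd
      exact hjun _ (by rw [hlastm]; rfl) yd hyd
    have hcr : (q1.reverse.support.map (fun x => (contractEdge G u v).degree x)).Chain' (· ≥ ·) := by
      rw [Walk.support_reverse, List.map_reverse]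
      exact List.isChain_reverse.mpr hc1
    have hA : q1.support.length ≤ mp G + 1 := by
      have := half_basic (fun l h => Or.inr h) htf huv q1.reverse hp1.reverse hcr
      rwa [Walk.support_reverse, List.length_reverse] at this
    have hsupg : q2.support.map (fun x => (contractEdge G u v).degree x)
        = (contractEdge G u v).degree ⟨u, huv.ne⟩ ::
          q2.support.tail.map (fun x => (contractEdge G u v).degree x) := by
      conv_lhs => rw [Walk.support_eq_cons q2]
      rw [List.map_cons]
    have hcq2 : (q2.support.map (fun x => (contractEdge G u v).degree x)).Chain' (· ≤ ·) := by
      rw [hsupg]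
      exact List.isChain_cons.mpr ⟨hjw, hc2⟩
    have hB : q2.support.length ≤ mp G + 1 :=
      half_basic (fun l h => Or.inl h) htf huv q2 hp2 hcq2
    have hlen : p.support.length = q1.support.length + q2.support.tail.length := by
      rw [hsup, List.length_append]
    have hq2t : q2.support.length = q2.support.tail.length + 1 := by
      conv_lhs => rw [Walk.support_eq_cons q2]
      rw [List.length_cons]
    by_cases h2n : q2.Nil
    · have h0 : q2.support.tail.length = 0 := by
        rw [Walk.nil_iff_support_eq.mp h2n]
        rfl
      omega
    by_cases h1n : q1.Nil
    · have hq1len : q1.support.length = 1 := by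
        rw [Walk.nil_iff_support_eq.mp h1n]
        rfl
      omega
    -- both halves nontrivial
    obtain ⟨y1, h2, q2t, hq2e⟩ := Walk.not_nil_iff.mp h2n
    have h1n' : ¬ q1.reverse.Nil := by
      rw [Walk.nil_iff_length_eq, Walk.length_reverse, ← Walk.nil_iff_length_eq]
      exact h1n
    obtain ⟨x1, h1, r1t, hr1e⟩ := Walk.not_nil_iff.mp h1n'
    have hy1u : y1.1 ≠ u := fun h => h2.ne (Subtype.ext h.symm)
    have hx1u : x1.1 ≠ u := fun h => h1.ne (Subtype.ext h.symm)
    have hady : G.Adj u y1.1 ∨ G.Adj v y1.1 := ((adj_w_iff huv.ne).mp h2).2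
    have hadx : G.Adj u x1.1 ∨ G.Adj v x1.1 := ((adj_w_iff huv.ne).mp h1).2
    have hdy : (contractEdge G u v).degree y1 = G.degree y1.1 := deg_pres htf huv hy1u
    have hdx : (contractEdge G u v).degree x1 = G.degree x1.1 := deg_pres htf huv hx1u
    have hdw2 : (contractEdge G u v).degree ⟨u, huv.ne⟩ + 2 = G.degree u + G.degree v :=
      deg_w htf huv
    have hdu : 1 ≤ G.degree u := by
      rw [← card_neighborFinset_eq_degree]
      exact Finset.card_pos.mpr ⟨v, (mem_neighborFinset _ _ _).mpr huv⟩
    have hdv : 1 ≤ G.degree v := by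
      rw [← card_neighborFinset_eq_degree]
      exact Finset.card_pos.mpr ⟨u, (mem_neighborFinset _ _ _).mpr huv.symm⟩
    have ht2 : q2.support.tail = q2t.support := by
      rw [hq2e, Walk.support_cons]
      rfl
    have hwy1 : (contractEdge G u v).degree ⟨u, huv.ne⟩ ≤ (contractEdge G u v).degree y1 := by
      refine hjw _ ?_
      have hh : (q2t.support.map (fun x => (contractEdge G u v).degree x)).head?
          = some ((contractEdge G u v).degree y1) := by
        conv_lhs => rw [Walk.support_eq_cons q2t]
        rw [List.map_cons, List.head?_cons]
      rw [ht2, hh]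
      rfl
    have hcrw : ((contractEdge G u v).degree ⟨u, huv.ne⟩ ::
        (r1t.support.map (fun x => (contractEdge G u v).degree x))).Chain' (· ≥ ·) := by
      have := hcr
      rwa [hr1e, Walk.support_cons, List.map_cons] at this
    have hxw : (contractEdge G u v).degree x1 ≤ (contractEdge G u v).degree ⟨u, huv.ne⟩ := by
      have := hcrw
      rw [Walk.support_eq_cons r1t, List.map_cons] at this
      exact (List.isChain_cons_cons.mp this).1
    have hchq2t : (q2t.support.map (fun x => (contractEdge G u v).degree x)).Chain' (· ≤ ·) := by
      rwa [ht2] at hc2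
    have hchr1t : (r1t.support.map (fun x => (contractEdge G u v).degree x)).Chain' (· ≥ ·) :=
      hcrw.tail
    have hp2c : (Walk.cons h2 q2t).IsPath := hq2e ▸ hp2
    have hp1c : (Walk.cons h1 r1t).IsPath := hr1e ▸ hp1.reverse
    have hlq1r : q1.support.length = r1t.support.length + 1 := by
      rw [← List.length_reverse (as := q1.support), ← Walk.support_reverse q1, hr1e,
        Walk.support_cons, List.length_cons]
    -- the case analysis
    have hkey : q2t.support.length + 1 ≤ mp G ∨ r1t.support.length + 1 ≤ mp G := by
      rcases hady with hy | hy
      · by_cases hcase : G.degree u ≤ (contractEdge G u v).degree ⟨u, huv.ne⟩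
        · refine Or.inl (half_ext (fun l h => Or.inl h) htf huv h2 q2t hp2c hchq2t u hy
            (Or.inl rfl) ?_)
          rw [← hdy]
          exact hcase.trans hwy1
        · have hdv1 : G.degree v = 1 := by omega
          have hxadj : G.Adj u x1.1 := by
            rcases hadx with h | h
            · exact h
            · exact absurd (deg_one hdv1 h huv.symm) hx1u
          refine Or.inr (half_ext (fun l h => Or.inr h) htf huv h1 r1t hp1c hchr1t u hxadj
            (Or.inl rfl) ?_)
          show G.degree x1.1 ≤ G.degree u
          rw [← hdx]
          omega
      · by_cases hcase : G.degree v ≤ (contractEdge G u v).degree ⟨u, huv.ne⟩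
        · refine Or.inl (half_ext (fun l h => Or.inl h) htf huv h2 q2t hp2c hchq2t v hy
            (Or.inr rfl) ?_)
          rw [← hdy]
          exact hcase.trans hwy1
        · have hdu1 : G.degree u = 1 := by omega
          have hxadj : G.Adj v x1.1 := by
            rcases hadx with h | h
            · exact absurd (deg_one hdu1 h huv) x1.2
            · exact h
          refine Or.inr (half_ext (fun l h => Or.inr h) htf huv h1 r1t hp1c hchr1t v hxadj
            (Or.inr rfl) ?_)
          show G.degree x1.1 ≤ G.degree v
          rw [← hdx]
          omega
    rw [← ht2] at hkey
    rcases hkey with h | h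
    · omega
    · omega

lemma key [DecidableRel G.Adj] [DecidableRel (contractEdge G u v).Adj]
    (htf : G.CliqueFree 3) (huv : G.Adj u v) {a b : {x : V // x ≠ v}}
    (p : (contractEdge G u v).Walk a b) (hp : p.IsPath)
    (hch : (p.support.map (fun x => (contractEdge G u v).degree x)).Chain' (· ≤ ·) ∨
           (p.support.map (fun x => (contractEdge G u v).degree x)).Chain' (· ≥ ·)) :
    p.support.length ≤ 2 * mp G := by
  rcases hch with h | h
  · exact key_le htf huv p hp h
  · have hrev : (p.reverse.support.map
        (fun x => (contractEdge G u v).degree x)).Chain' (· ≤ ·) := by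
      rw [Walk.support_reverse, List.map_reverse]
      exact List.isChain_reverse.mpr h
    have := key_le htf huv p.reverse hp.reverse hrev
    rwa [Walk.support_reverse, List.length_reverse] at this

end MPAux

theorem mp_contract_le {V : Type*} [Fintype V] [DecidableEq V] (G : SimpleGraph V)
    (u v : V) (he : G.Adj u v) (htf : G.CliqueFree 3) :
    mp (contractEdge G u v) ≤ 2 * mp G := by
  letI : DecidableRel G.Adj := Classical.decRel _
  letI : DecidableRel (contractEdge G u v).Adj := Classical.decRel _
  have hub : ∀ n ∈ {n : ℕ | ∃ (a b : {x : V // x ≠ v}) (p : (contractEdge G u v).Walk a b),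
      p.IsPath ∧
      (List.Chain' (· ≤ ·) (p.support.map (fun x => (contractEdge G u v).degree x)) ∨
       List.Chain' (· ≥ ·) (p.support.map (fun x => (contractEdge G u v).degree x))) ∧
      p.support.length = n}, n ≤ 2 * mp G := by
    rintro n ⟨a, b, p, hp, hch, rfl⟩
    exact MPAux.key htf he p hp hch
  unfold mp
  refine csSup_le' ?_
  rintro n ⟨a, b, p, hp, hch, rfl⟩
  refine hub _ ⟨a, b, p, hp, ?_, rfl⟩
  convert hch using 4 <;> congr!
end
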